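/- arXiv:gr-qc/9801099 — 3 statements merged into one kernel-verified Lean document; each statement's English description precedes it below -/
import Mathlib

section
/- For every integer n ≥ 1 and every point x = (x₁,…,x_n) ∈ X_d^n, the set Λⁿ_x = {y = (y₁,…,y_n) : y_k ∈ ℝ^{d+1}, x_k·y_k = 0 for 1 ≤ k ≤ n, and y_{j+1} − y_j ∈ V₊ for 1 ≤ j ≤ n−1} is a nonempty open convex cone with apex at the origin in the tangent space T_x X_d^n = {y : x_k·y_k = 0, 1 ≤ k ≤ n}. -/
noncomputable section

/-- Minkowski bilinear form on `ℝ^{d+1}`: `x·y = x⁰y⁰ - x¹y¹ - ⋯ - xᵈyᵈ`. -/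
def minkR (d : ℕ) (x y : Fin (d+1) → ℝ) : ℝ := 2 * x 0 * y 0 - ∑ i, x i * y i

lemma mink_comm (d : ℕ) (x y : Fin (d+1) → ℝ) : minkR d x y = minkR d y x := by
  unfold minkR
  rw [Finset.sum_congr rfl (fun i _ => mul_comm (x i) (y i))]
  ring

lemma mink_add (d : ℕ) (x y z : Fin (d+1) → ℝ) :
    minkR d x (y + z) = minkR d x y + minkR d x z := by
  unfold minkR
  simp only [Pi.add_apply, mul_add, Finset.sum_add_distrib]
  ring

lemma mink_smul (d : ℕ) (x y : Fin (d+1) → ℝ) (t : ℝ) :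
    minkR d x (t • y) = t * minkR d x y := by
  unfold minkR
  rw [show (∑ i, x i * (t • y) i) = t * ∑ i, x i * y i from by
    rw [Finset.mul_sum]; exact Finset.sum_congr rfl (fun i _ => by simp; ring)]
  simp; ring

lemma mink_sub (d : ℕ) (x y z : Fin (d+1) → ℝ) :
    minkR d x (y - z) = minkR d x y - minkR d x z := by
  have h := mink_add d x (y - z) z
  simp at h; linarith

lemma mink_quad (d : ℕ) (y z : Fin (d+1) → ℝ) (a b : ℝ) :
    minkR d (a • y + b • z) (a • y + b • z)
      = a^2 * minkR d y y + 2*a*b * minkR d y z + b^2 * minkR d z z := by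
  rw [mink_add, mink_comm d _ (a•y), mink_comm d _ (b•z), mink_add, mink_add,
    mink_smul, mink_smul, mink_smul, mink_smul,
    mink_comm d (a•y) y, mink_comm d (a•y) z, mink_comm d (b•z) y, mink_comm d (b•z) z,
    mink_smul, mink_smul, mink_smul, mink_smul, mink_comm d z y]
  ring

/-- The open forward light cone `V₊`. -/
def Vplus (d : ℕ) : Set (Fin (d+1) → ℝ) := {y | 0 < y 0 ∧ 0 < minkR d y y}

/-- The tangent space to `X_d^n` at `x`, identified with
`{y : x_k·y_k = 0 for all k}`. -/
def tangentSp (d n : ℕ) (x : Fin n → Fin (d+1) → ℝ) : Set (Fin n → Fin (d+1) → ℝ) :=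
  {y | ∀ k, minkR d (x k) (y k) = 0}

/-- The fiber `Λⁿ_x` of the profile of the tuboid `𝒯_n` at `x ∈ X_d^n`. -/
def profileFiber (d n : ℕ) (x : Fin n → Fin (d+1) → ℝ) : Set (Fin n → Fin (d+1) → ℝ) :=
  {y | (∀ k, minkR d (x k) (y k) = 0) ∧
    ∀ (j : ℕ) (h : j + 1 < n),
      (fun i => (y ⟨j+1, h⟩ - y ⟨j, Nat.lt_of_succ_lt h⟩) i) ∈ Vplus d}

lemma mink_erase (d : ℕ) (x y : Fin (d+1) → ℝ) :
    minkR d x y = x 0 * y 0 - ∑ i ∈ Finset.univ.erase 0, x i * y i := by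
  unfold minkR
  rw [← Finset.add_sum_erase _ (fun i => x i * y i) (Finset.mem_univ 0)]
  ring

lemma mink_pos_of_Vplus (d : ℕ) {y z : Fin (d+1) → ℝ} (hy : y ∈ Vplus d) (hz : z ∈ Vplus d) :
    0 < minkR d y z := by
  obtain ⟨hy0, hyy⟩ := hy
  obtain ⟨hz0, hzz⟩ := hz
  rw [mink_erase] at hyy hzz ⊢
  set s := Finset.univ.erase (0 : Fin (d+1))
  have hy2 : ∑ i ∈ s, y i * y i < y 0 * y 0 := by linarith
  have hz2 : ∑ i ∈ s, z i * z i < z 0 * z 0 := by linarith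
  have hsq : (∑ i ∈ s, y i * z i)^2 ≤ (∑ i ∈ s, y i * y i) * (∑ i ∈ s, z i * z i) := by
    have := Finset.sum_mul_sq_le_sq_mul_sq s y z
    calc (∑ i ∈ s, y i * z i)^2 ≤ (∑ i ∈ s, y i ^2) * (∑ i ∈ s, z i ^2) := this
    _ = (∑ i ∈ s, y i * y i) * (∑ i ∈ s, z i * z i) := by
        simp [sq]
  have hyS : 0 ≤ ∑ i ∈ s, y i * y i := Finset.sum_nonneg (fun i _ => mul_self_nonneg _)
  have hzS : 0 ≤ ∑ i ∈ s, z i * z i := Finset.sum_nonneg (fun i _ => mul_self_nonneg _)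
  have hAB : (∑ i ∈ s, y i * y i) * (∑ i ∈ s, z i * z i) < (y 0 * y 0) * (z 0 * z 0) :=
    mul_lt_mul'' hy2 hz2 hyS hzS
  nlinarith [hsq, hAB, mul_pos hy0 hz0]

lemma Vplus_smul (d : ℕ) {y : Fin (d+1) → ℝ} (hy : y ∈ Vplus d) {t : ℝ} (ht : 0 < t) :
    t • y ∈ Vplus d := by
  obtain ⟨h0, hm⟩ := hy
  constructor
  · simpa using mul_pos ht h0
  · rw [show t • y = t • y + (0:ℝ) • y by simp]
    rw [mink_quad]
    simp
    positivity

lemma Vplus_convex (d : ℕ) : Convex ℝ (Vplus d) := by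
  intro y hy z hz a b ha hb hab
  constructor
  · have : (a • y + b • z) 0 = a * y 0 + b * z 0 := by simp
    rw [this]
    rcases ha.lt_or_eq with ha' | ha'
    · have := mul_pos ha' hy.1
      nlinarith [mul_nonneg hb hz.1.le]
    · have hb' : b = 1 := by linarith
      simp [← ha', hb', hz.1]
  · rw [mink_quad]
    have hyz := mink_pos_of_Vplus d hy hz
    rcases ha.lt_or_eq with ha' | ha'
    · nlinarith [mul_nonneg hb hz.2.le, mul_nonneg (mul_nonneg ha hb) hyz.le, sq_nonneg b, mul_pos (mul_pos ha' ha') hy.2]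
    · have hb' : b = 1 := by linarith
      have : a = 0 := ha'.symm
      simp [this, hb', hz.2]

lemma Vplus_open (d : ℕ) : IsOpen (Vplus d) := by
  have h1 : Continuous fun y : Fin (d+1) → ℝ => y 0 := continuous_apply 0
  have h2 : Continuous fun y : Fin (d+1) → ℝ => minkR d y y := by
    unfold minkR
    exact ((continuous_const.mul h1).mul h1).sub
      (continuous_finset_sum _ (fun i _ => (continuous_apply i).mul (continuous_apply i)))
  have : Vplus d = (fun y : Fin (d+1) → ℝ => y 0) ⁻¹' Set.Ioi 0 ∩
      (fun y => minkR d y y) ⁻¹' Set.Ioi 0 := rfl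
  rw [this]
  exact (isOpen_Ioi.preimage h1).inter (isOpen_Ioi.preimage h2)

lemma timelike_tangent (d : ℕ) (R : ℝ) (hR : 0 < R) (x : Fin (d+1) → ℝ)
    (hx : minkR d x x = -(R^2)) :
    ∃ u, minkR d x u = 0 ∧ 1 ≤ u 0 ∧ 1 ≤ minkR d u u := by
  set e0 : Fin (d+1) → ℝ := fun i => if i = 0 then 1 else 0 with he0
  have hxe : minkR d x e0 = x 0 := by
    unfold minkR
    simp [he0, mul_ite]
    ring
  have hee : minkR d e0 e0 = 1 := by
    unfold minkR
    simp [he0, ite_and]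
    norm_num
  have hR2 : (0:ℝ) < R^2 := by positivity
  refine ⟨e0 + (x 0 / R^2) • x, ?_, ?_, ?_⟩
  · rw [mink_add, mink_smul, hxe, hx]
    field_simp
    ring
  · have : (e0 + (x 0 / R^2) • x) 0 = 1 + (x 0 / R^2) * x 0 := by simp [he0]
    rw [this]
    have : 0 ≤ (x 0 / R^2) * x 0 := by
      rw [div_mul_eq_mul_div]
      exact div_nonneg (mul_self_nonneg _) hR2.le
    linarith
  · have h1 : e0 + (x 0 / R^2) • x = (1:ℝ) • e0 + (x 0 / R^2) • x := by simp
    rw [h1, mink_quad, hee, hx, mink_comm d e0 x, hxe]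
    have hc : (x 0 / R^2) * R^2 = x 0 := div_mul_cancel₀ _ hR2.ne'
    have hc2 : (x 0 / R^2) * x 0 = (x 0 / R^2)^2 * R^2 := by
      conv_rhs => rw [sq]
      rw [mul_assoc, hc]
    nlinarith [mul_nonneg (sq_nonneg (x 0 / R^2)) hR2.le, hc2]

/-- for every `x ∈ X_d^n`, `Λⁿ_x` is a nonempty open convex cone with apex at the
origin in the tangent space `T_x X_d^n` (openness being relative to the tangent space). -/
theorem stmt1 (d : ℕ) (hd : 1 ≤ d) (R : ℝ) (hR : 0 < R) (n : ℕ) (hn : 1 ≤ n)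
    (x : Fin n → Fin (d+1) → ℝ) (hx : ∀ k, minkR d (x k) (x k) = -(R^2)) :
    (profileFiber d n x).Nonempty ∧
    Convex ℝ (profileFiber d n x) ∧
    (∀ t : ℝ, 0 < t → ∀ y ∈ profileFiber d n x, t • y ∈ profileFiber d n x) ∧
    ∃ U : Set (Fin n → Fin (d+1) → ℝ), IsOpen U ∧
      profileFiber d n x = U ∩ tangentSp d n x := by
  classical
  refine ⟨?_, ?_, ?_, ?_⟩
  · -- Nonempty
    choose u hu0 hu1 hu2 using fun k => timelike_tangent d R hR (x k) (hx k)
    set M : ℕ → ℝ := fun k =>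
      if h : k + 1 < n then
        |u ⟨k, Nat.lt_of_succ_lt h⟩ 0| +
          2 * |minkR d (u ⟨k+1, h⟩) (u ⟨k, Nat.lt_of_succ_lt h⟩)| else 0 with hM
    have hMnn : ∀ k, 0 ≤ M k := by
      intro k; rw [hM]; dsimp only; split
      · positivity
      · exact le_refl 0
    set C : ℝ := 1 + ∑ k ∈ Finset.range n, M k with hC
    have hC1 : (1:ℝ) ≤ C := by
      have := Finset.sum_nonneg (fun i (_ : i ∈ Finset.range n) => hMnn i)
      rw [hC]; linarith
    have hC0 : (0:ℝ) < C := by linarith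
    have hCk : ∀ j, j + 1 < n → 1 + M j ≤ C := by
      intro j hj
      have hmem : j ∈ Finset.range n := Finset.mem_range.mpr (Nat.lt_of_succ_lt hj)
      have := Finset.single_le_sum (f := M) (fun i _ => hMnn i) hmem
      rw [hC]; linarith
    refine ⟨fun k => (C ^ (k:ℕ)) • u k, ?_, ?_⟩
    · intro k
      show minkR d (x k) ((C ^ (k:ℕ)) • u k) = 0
      rw [mink_smul, hu0]; ring
    · intro j h
      set a := u ⟨j+1, h⟩ with hadef
      set b := u ⟨j, Nat.lt_of_succ_lt h⟩ with hbdef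
      have key : (C • a - b) ∈ Vplus d := by
        have hMj : M j = |b 0| + 2 * |minkR d a b| := by
          rw [hM]; dsimp only; rw [dif_pos h]
        have hCge := hCk j h; rw [hMj] at hCge
        have h1 : 1 ≤ a 0 := hu1 _
        have h1' : 1 ≤ b 0 := hu1 _
        have h2 : b 0 ≤ |b 0| := le_abs_self _
        have h3 : minkR d a b ≤ |minkR d a b| := le_abs_self _
        have h4 : (0:ℝ) ≤ |minkR d a b| := abs_nonneg _
        constructor
        · show 0 < (C • a - b) 0
          have e : (C • a - b) 0 = C * a 0 - b 0 := by simp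
          rw [e]
          have hca : C * 1 ≤ C * a 0 := mul_le_mul_of_nonneg_left h1 hC0.le
          linarith
        · show 0 < minkR d (C • a - b) (C • a - b)
          have e : C • a - b = C • a + (-1 : ℝ) • b := by
            funext i
            simp only [Pi.sub_apply, Pi.add_apply, Pi.smul_apply, smul_eq_mul]
            ring
          rw [e, mink_quad]
          have h5 : 1 ≤ minkR d a a := hu2 _
          have h6 : 1 ≤ minkR d b b := hu2 _
          have h7 : C * 1 ≤ C * (C - 2 * |minkR d a b|) :=
            mul_le_mul_of_nonneg_left (by linarith) hC0.le
          have h8 : C * minkR d a b ≤ C * |minkR d a b| :=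
            mul_le_mul_of_nonneg_left h3 hC0.le
          nlinarith [sq_nonneg C, mul_nonneg (sub_nonneg.mpr h5) (sq_nonneg C)]
      have e2 : (fun i => (((fun k : Fin n => (C ^ (k:ℕ)) • u k) (⟨j+1, h⟩ : Fin n) -
            (fun k : Fin n => (C ^ (k:ℕ)) • u k) (⟨j, Nat.lt_of_succ_lt h⟩ : Fin n)) i))
          = (C ^ j) • (C • a - b) := by
        funext i
        show C ^ (j+1) * u ⟨j+1, h⟩ i - C ^ j * u ⟨j, Nat.lt_of_succ_lt h⟩ i
            = C ^ j * (C * a i - b i)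
        rw [hadef, hbdef, pow_succ]
        ring
      exact e2 ▸ Vplus_smul d key (by positivity)
  · -- Convex
    intro y hy z hz a b ha hb hab
    refine ⟨?_, ?_⟩
    · intro k
      show minkR d (x k) (a • (y k) + b • (z k)) = 0
      rw [mink_add, mink_smul, mink_smul, hy.1 k, hz.1 k]; ring
    · intro j h
      have e : (fun i => (((a • y + b • z) (⟨j+1, h⟩ : Fin n) -
            (a • y + b • z) (⟨j, Nat.lt_of_succ_lt h⟩ : Fin n)) i))
          = a • (y ⟨j+1, h⟩ - y ⟨j, Nat.lt_of_succ_lt h⟩)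
            + b • (z ⟨j+1, h⟩ - z ⟨j, Nat.lt_of_succ_lt h⟩) := by
        funext i
        simp only [Pi.add_apply, Pi.sub_apply, Pi.smul_apply, smul_eq_mul]
        ring
      exact e ▸ Vplus_convex d (hy.2 j h) (hz.2 j h) ha hb hab
  · -- Cone
    intro t ht y hy
    refine ⟨?_, ?_⟩
    · intro k
      show minkR d (x k) (t • (y k)) = 0
      rw [mink_smul, hy.1 k]; ring
    · intro j h
      have e : (fun i => (((t • y) (⟨j+1, h⟩ : Fin n) -
            (t • y) (⟨j, Nat.lt_of_succ_lt h⟩ : Fin n)) i))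
          = t • (y ⟨j+1, h⟩ - y ⟨j, Nat.lt_of_succ_lt h⟩) := by
        funext i
        simp only [Pi.sub_apply, Pi.smul_apply, smul_eq_mul]
        ring
      exact e ▸ Vplus_smul d (hy.2 j h) ht
  · -- Relatively open
    refine ⟨{y | ∀ (j : ℕ) (h : j + 1 < n),
        (y ⟨j+1, h⟩ - y ⟨j, Nat.lt_of_succ_lt h⟩) ∈ Vplus d}, ?_, ?_⟩
    · have e : {y : Fin n → Fin (d+1) → ℝ | ∀ (j : ℕ) (h : j + 1 < n),
            (y ⟨j+1, h⟩ - y ⟨j, Nat.lt_of_succ_lt h⟩) ∈ Vplus d}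
          = ⋂ (j : Fin n), {y : Fin n → Fin (d+1) → ℝ | ∀ h : (j:ℕ) + 1 < n,
            (y ⟨(j:ℕ)+1, h⟩ - y ⟨(j:ℕ), Nat.lt_of_succ_lt h⟩) ∈ Vplus d} := by
        ext y
        simp only [Set.mem_setOf_eq, Set.mem_iInter]
        constructor
        · intro hy j hj; exact hy (j:ℕ) hj
        · intro hy j hj; exact hy ⟨j, Nat.lt_of_succ_lt hj⟩ hj
      rw [e]
      apply isOpen_iInter_of_finite
      intro j
      by_cases h : (j:ℕ) + 1 < n
      · have e2 : {y : Fin n → Fin (d+1) → ℝ | ∀ h : (j:ℕ) + 1 < n,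
              (y ⟨(j:ℕ)+1, h⟩ - y ⟨(j:ℕ), Nat.lt_of_succ_lt h⟩) ∈ Vplus d}
            = (fun y : Fin n → Fin (d+1) → ℝ =>
                y ⟨(j:ℕ)+1, h⟩ - y ⟨(j:ℕ), Nat.lt_of_succ_lt h⟩) ⁻¹' Vplus d := by
          ext y
          exact ⟨fun hy => hy h, fun hy _ => hy⟩
        rw [e2]
        have hc : Continuous (fun y : Fin n → Fin (d+1) → ℝ =>
            y ⟨(j:ℕ)+1, h⟩ - y ⟨(j:ℕ), Nat.lt_of_succ_lt h⟩) := by fun_prop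
        exact (Vplus_open d).preimage hc
      · have e2 : {y : Fin n → Fin (d+1) → ℝ | ∀ h : (j:ℕ) + 1 < n,
              (y ⟨(j:ℕ)+1, h⟩ - y ⟨(j:ℕ), Nat.lt_of_succ_lt h⟩) ∈ Vplus d}
            = Set.univ := by
          ext y
          simp only [Set.mem_setOf_eq, Set.mem_univ, iff_true]
          intro h'; exact absurd h' h
        rw [e2]; exact isOpen_univ
    · ext y
      simp only [profileFiber, tangentSp, Set.mem_setOf_eq, Set.mem_inter_iff]
      tauto
end
end

section
/- Let a ∈ (0,1) and define, for Im w > 0, Φ(w,a) = iπ − log((w − a⁻¹)/(w − a)) − log((w + a)/(w + a⁻¹)). Then w ↦ Im Φ(w,a) is the bounded harmonic function on the upper half-plane ℂ₊ = {w : Im w > 0} with boundary values 0 on the open real segments (−a⁻¹, −a) and (a, a⁻¹) and π on the remaining real points; in particular 0 < Im Φ(w,a) < π for all w ∈ ℂ₊, Im Φ(·,a) is harmonic on ℂ₊, and it extends continuously to ℝ ∖ {±a, ±a⁻¹} with the stated boundary values. -/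
noncomputable section
open Complex

/-- The open upper half-plane `ℂ₊`. -/
def Cplus : Set ℂ := {w | 0 < w.im}

/-- `Im Φ(w,a)` where `Φ(w,a) = iπ − log((w − a⁻¹)/(w − a)) − log((w + a)/(w + a⁻¹))`
(the imaginary part of a branch of `log` being given by `arg`). -/
def ImPhi (a : ℝ) (w : ℂ) : ℝ :=
  Real.pi - Complex.arg ((w - (a : ℂ)⁻¹) / (w - (a : ℂ)))
    - Complex.arg ((w + (a : ℂ)) / (w + (a : ℂ)⁻¹))

/-- arg of a point in the open upper half-plane is positive. -/
lemma my_arg_pos {z : ℂ} (h : 0 < z.im) : 0 < Complex.arg z := by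
  rcases lt_or_eq_of_le (Complex.arg_nonneg_iff.mpr h.le) with h' | h'
  · exact h'
  · exfalso
    have := Complex.arg_eq_zero_iff.mp h'.symm
    linarith [this.2]

lemma my_arg_lt_pi {z : ℂ} (h : 0 < z.im) : Complex.arg z < Real.pi :=
  Complex.arg_lt_pi_iff.mpr (Or.inr h.ne')

/-- imaginary part of (w - v)/(w - u) for real u < v, Im w > 0. -/
lemma my_im_div_pos {w : ℂ} (hw : 0 < w.im) {u v : ℝ} (huv : u < v) :
    0 < ((w - (v : ℂ)) / (w - (u : ℂ))).im := by
  have hne : w - (u : ℂ) ≠ 0 := by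
    intro h0
    have : (w - (u : ℂ)).im = 0 := by rw [h0]; simp
    simp at this
    linarith
  have hns : 0 < Complex.normSq (w - (u : ℂ)) := Complex.normSq_pos.mpr hne
  rw [Complex.div_im, div_sub_div_same]
  apply div_pos _ hns
  simp only [Complex.sub_im, Complex.sub_re, Complex.ofReal_im, Complex.ofReal_re]
  nlinarith

lemma my_arg_add {z₁ z₂ : ℂ} (h1 : 0 < z₁.im) (h2 : 0 < z₂.im) (h12 : 0 < (z₁ * z₂).im) :
    Complex.arg z₁ + Complex.arg z₂ = Complex.arg (z₁ * z₂) := by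
  have hz1 : z₁ ≠ 0 := by intro h; rw [h] at h1; simp at h1
  have hz2 : z₂ ≠ 0 := by intro h; rw [h] at h2; simp at h2
  have hang : (Complex.arg (z₁ * z₂) : Real.Angle) = (Complex.arg z₁ + Complex.arg z₂ : ℝ) := by
    rw [Complex.arg_mul_coe_angle hz1 hz2]; rfl
  rw [Real.Angle.angle_eq_iff_two_pi_dvd_sub] at hang
  obtain ⟨k, hk⟩ := hang
  have pi_pos := Real.pi_pos
  have b1 : 0 < Complex.arg z₁ := my_arg_pos h1
  have b2 : Complex.arg z₁ < Real.pi := my_arg_lt_pi h1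
  have b3 : 0 < Complex.arg z₂ := my_arg_pos h2
  have b4 : Complex.arg z₂ < Real.pi := my_arg_lt_pi h2
  have b5 : 0 < Complex.arg (z₁ * z₂) := my_arg_pos h12
  have b6 : Complex.arg (z₁ * z₂) < Real.pi := my_arg_lt_pi h12
  have hk0 : k = 0 := by
    rcases lt_trichotomy k 0 with h | h | h
    · have : (k : ℝ) ≤ -1 := by exact_mod_cast Int.le_sub_one_of_lt h
      nlinarith
    · exact h
    · have : (1 : ℝ) ≤ (k : ℝ) := by exact_mod_cast h
      nlinarith
  rw [hk0] at hk
  push_cast at hk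
  linarith

lemma my_imQ1_pos {a : ℝ} (ha0 : 0 < a) (ha1 : a < 1) {w : ℂ} (hw : 0 < w.im) :
    0 < ((w - (a : ℂ)⁻¹) / (w - (a : ℂ))).im := by
  have hlt : a < a⁻¹ := lt_trans ha1 (by rw [lt_inv_comm₀] <;> simp [ha0, ha1])
  have := my_im_div_pos hw hlt
  simpa [Complex.ofReal_inv] using this

lemma my_imQ2_pos {a : ℝ} (ha0 : 0 < a) (ha1 : a < 1) {w : ℂ} (hw : 0 < w.im) :
    0 < ((w + (a : ℂ)) / (w + (a : ℂ)⁻¹)).im := by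
  have hlt : a < a⁻¹ := lt_trans ha1 (by rw [lt_inv_comm₀] <;> simp [ha0, ha1])
  have hlt' : -a⁻¹ < -a := by linarith
  have := my_im_div_pos hw hlt'
  have hc1 : w - ((-a : ℝ) : ℂ) = w + (a : ℂ) := by push_cast; ring
  have hc2 : w - ((-a⁻¹ : ℝ) : ℂ) = w + (a : ℂ)⁻¹ := by push_cast; ring
  rwa [hc1, hc2] at this

/-- key positivity of the imaginary part of the product quotient. -/
lemma my_im_prod_pos {a : ℝ} (ha0 : 0 < a) (ha1 : a < 1) {w : ℂ} (hw : 0 < w.im) :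
    0 < (((w - (a : ℂ)⁻¹) / (w - (a : ℂ))) * ((w + (a : ℂ)) / (w + (a : ℂ)⁻¹))).im := by
  have hat : a * a⁻¹ = 1 := mul_inv_cancel₀ ha0.ne'
  have hta : (0:ℝ) < a⁻¹ := inv_pos.mpr ha0
  rw [div_mul_div_comm]
  have hne1 : w - (a : ℂ) ≠ 0 := by
    intro h0
    have : (w - (a : ℂ)).im = 0 := by rw [h0]; simp
    simp at this; linarith
  have hne2 : w + (a : ℂ)⁻¹ ≠ 0 := by
    intro h0
    have : (w + (a : ℂ)⁻¹).im = 0 := by rw [h0]; simp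
    simp at this; linarith
  have hns : 0 < Complex.normSq ((w - (a : ℂ)) * (w + (a : ℂ)⁻¹)) :=
    Complex.normSq_pos.mpr (mul_ne_zero hne1 hne2)
  rw [Complex.div_im, div_sub_div_same]
  apply div_pos _ hns
  have hcast : ((a : ℂ)⁻¹) = ((a⁻¹ : ℝ) : ℂ) := by push_cast; ring
  rw [hcast]
  simp only [Complex.mul_im, Complex.mul_re, Complex.sub_re, Complex.sub_im,
    Complex.add_re, Complex.add_im, Complex.ofReal_re, Complex.ofReal_im]
  have hlt : a < a⁻¹ := lt_trans ha1 (by rw [← hat] at ha1 ⊢; nlinarith)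
  have h1 : 0 < w.re^2 + w.im^2 + 1 := by positivity
  nlinarith [hw, mul_pos hw (mul_pos (sub_pos.mpr hlt) h1), hat, mul_pos hw hta,
    mul_pos hw ha0, sq_nonneg w.re, sq_nonneg w.im,
    mul_pos (mul_pos hw hta) hta, mul_pos (mul_pos hw ha0) hta]

lemma my_slice_x {g : ℂ → ℂ} {g' c : ℂ} {t : ℝ} (h : HasDerivAt g g' (↑t + c)) :
    HasDerivAt (fun s : ℝ => (g (↑s + c)).im) g'.im t := by
  have h1 : HasDerivAt (fun z : ℂ => g (z + c)) g' (↑t : ℂ) := by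
    simpa [Function.comp_def] using h.comp (↑t : ℂ) ((hasDerivAt_id (↑t : ℂ)).add_const c)
  have h2 : HasDerivAt (fun s : ℝ => g (↑s + c)) g' t := h1.comp_ofReal
  simpa [Function.comp_def] using (Complex.imCLM.hasFDerivAt.comp_hasDerivAt t h2)

lemma my_slice_y {g : ℂ → ℂ} {g' c : ℂ} {t : ℝ} (h : HasDerivAt g g' (c + ↑t * I)) :
    HasDerivAt (fun s : ℝ => (g (c + ↑s * I)).im) (g' * I).im t := by
  have h1 : HasDerivAt (fun z : ℂ => g (c + z * I)) (g' * I) (↑t : ℂ) := by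
    have hin : HasDerivAt (fun z : ℂ => c + z * I) I (↑t : ℂ) := by
      simpa using ((hasDerivAt_id (↑t : ℂ)).mul_const I).const_add c
    simpa [Function.comp_def] using h.comp (↑t : ℂ) hin
  have h2 : HasDerivAt (fun s : ℝ => g (c + ↑s * I)) (g' * I) t := h1.comp_ofReal
  simpa [Function.comp_def] using (Complex.imCLM.hasFDerivAt.comp_hasDerivAt t h2)

/-- the holomorphic potential. -/
def myF (a : ℝ) : ℂ → ℂ := fun w =>
  (Real.pi : ℂ) * I - Complex.log ((w - (a : ℂ)⁻¹) / (w - (a : ℂ)))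
    - Complex.log ((w + (a : ℂ)) / (w + (a : ℂ)⁻¹))

lemma my_F_eq (a : ℝ) (w : ℂ) : (myF a w).im = ImPhi a w := by
  simp [myF, ImPhi, Complex.log_im, Complex.sub_im, Complex.mul_im]

lemma my_F_diff {a : ℝ} (ha0 : 0 < a) (ha1 : a < 1) : DifferentiableOn ℂ (myF a) Cplus := by
  intro z hz
  have hw : 0 < z.im := hz
  have hne1 : z - (a : ℂ) ≠ 0 := by
    intro h0
    have : (z - (a : ℂ)).im = 0 := by rw [h0]; simp
    simp at this; linarith
  have hne2 : z + (a : ℂ)⁻¹ ≠ 0 := by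
    intro h0
    have : (z + (a : ℂ)⁻¹).im = 0 := by rw [h0]; simp
    simp at this; linarith
  have hQ1 : DifferentiableAt ℂ (fun z : ℂ => (z - (a : ℂ)⁻¹) / (z - (a : ℂ))) z :=
    DifferentiableAt.div (by fun_prop) (by fun_prop) hne1
  have hQ2 : DifferentiableAt ℂ (fun z : ℂ => (z + (a : ℂ)) / (z + (a : ℂ)⁻¹)) z :=
    DifferentiableAt.div (by fun_prop) (by fun_prop) hne2
  have hm1 : (z - (a : ℂ)⁻¹) / (z - (a : ℂ)) ∈ Complex.slitPlane :=
    Complex.mem_slitPlane_iff.mpr (Or.inr (my_imQ1_pos ha0 ha1 hw).ne')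
  have hm2 : (z + (a : ℂ)) / (z + (a : ℂ)⁻¹) ∈ Complex.slitPlane :=
    Complex.mem_slitPlane_iff.mpr (Or.inr (my_imQ2_pos ha0 ha1 hw).ne')
  exact (((differentiableAt_const _).sub (hQ1.clog hm1)).sub (hQ2.clog hm2)).differentiableWithinAt

lemma my_arg_tendsto {f : ℂ → ℂ} {l : Filter ℂ} {q : ℝ} (hq : q ≠ 0)
    (hf : Filter.Tendsto f l (nhds ((q : ℝ) : ℂ))) (him : ∀ᶠ w in l, 0 ≤ (f w).im) :
    Filter.Tendsto (fun w => Complex.arg (f w)) l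
      (nhds (if q < 0 then Real.pi else 0)) := by
  rcases lt_or_gt_of_ne hq with hq' | hq'
  · rw [if_pos hq']
    have hc : ContinuousWithinAt Complex.arg {z : ℂ | 0 ≤ z.im} ((q : ℝ) : ℂ) :=
      Complex.continuousWithinAt_arg_of_re_neg_of_im_zero (by simpa using hq') (by simp)
    have ht := hc.tendsto
    rw [Complex.arg_ofReal_of_neg hq'] at ht
    exact ht.comp (tendsto_nhdsWithin_iff.mpr ⟨hf, him⟩)
  · rw [if_neg (by linarith)]
    have hc : ContinuousAt Complex.arg ((q : ℝ) : ℂ) :=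
      Complex.continuousAt_arg (Complex.mem_slitPlane_iff.mpr (Or.inl (by simpa using hq')))
    have ht := hc.tendsto
    rw [Complex.arg_ofReal_of_nonneg hq'.le] at ht
    exact ht.comp hf

/-- `w ↦ Im Φ(w,a)` satisfies `0 < Im Φ(w,a) < π` on `ℂ₊`, is harmonic on
`ℂ₊` (Laplace's equation for the two real second partial derivatives), and extends
continuously to `ℝ ∖ {±a, ±a⁻¹}` with boundary value `0` on `(−a⁻¹,−a) ∪ (a,a⁻¹)` and
`π` on the remaining real points. -/
theorem stmt12 (a : ℝ) (ha : a ∈ Set.Ioo (0 : ℝ) 1) :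
    (∀ w : ℂ, 0 < w.im → 0 < ImPhi a w ∧ ImPhi a w < Real.pi) ∧
    (∀ w : ℂ, 0 < w.im →
      iteratedDeriv 2 (fun x : ℝ => ImPhi a ((x : ℂ) + (w.im : ℂ) * Complex.I)) w.re +
      iteratedDeriv 2 (fun y : ℝ => ImPhi a ((w.re : ℂ) + (y : ℂ) * Complex.I)) w.im = 0) ∧
    (∀ x : ℝ, x ≠ a → x ≠ -a → x ≠ a⁻¹ → x ≠ -a⁻¹ →
      Filter.Tendsto (ImPhi a) (nhdsWithin ((x : ℝ) : ℂ) Cplus)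
        (nhds (if (a < x ∧ x < a⁻¹) ∨ (-a⁻¹ < x ∧ x < -a) then 0 else Real.pi))) := by
  obtain ⟨ha0, ha1⟩ := ha
  have hlt : a < a⁻¹ := lt_trans ha1 ((one_lt_inv₀ ha0).mpr ha1)
  refine ⟨?_, ?_, ?_⟩
  · -- bounds
    intro w hw
    have h1 := my_imQ1_pos ha0 ha1 hw
    have h2 := my_imQ2_pos ha0 ha1 hw
    have h12 := my_im_prod_pos ha0 ha1 hw
    have hsum := my_arg_add h1 h2 h12
    have hp1 := my_arg_pos h12
    have hp2 := my_arg_lt_pi h12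
    unfold ImPhi
    constructor <;> linarith
  · -- harmonicity
    intro w hw
    have hopen : IsOpen Cplus := isOpen_lt continuous_const Complex.continuous_im
    have hdiff := my_F_diff ha0 ha1
    have han : AnalyticOnNhd ℂ (myF a) Cplus := hdiff.analyticOnNhd hopen
    have han' : AnalyticOnNhd ℂ (deriv (myF a)) Cplus := han.deriv
    have hF1 : ∀ z ∈ Cplus, HasDerivAt (myF a) (deriv (myF a) z) z := fun z hz =>
      ((han z hz).differentiableAt).hasDerivAt
    have hF2 : ∀ z ∈ Cplus, HasDerivAt (deriv (myF a)) (deriv (deriv (myF a)) z) z := fun z hz =>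
      ((han' z hz).differentiableAt).hasDerivAt
    have hmem1 : ∀ t : ℝ, ((t : ℂ) + (w.im : ℂ) * I) ∈ Cplus := by
      intro t; show 0 < ((t : ℂ) + (w.im : ℂ) * I).im; simpa using hw
    have hmem2 : ∀ t : ℝ, 0 < t → ((w.re : ℂ) + (t : ℂ) * I) ∈ Cplus := by
      intro t ht; show 0 < ((w.re : ℂ) + (t : ℂ) * I).im; simpa using ht
    have hg1 : (fun x : ℝ => ImPhi a ((x : ℂ) + (w.im : ℂ) * I))
        = fun x : ℝ => (myF a ((x : ℂ) + (w.im : ℂ) * I)).im :=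
      funext fun x => (my_F_eq a _).symm
    have hg2 : (fun y : ℝ => ImPhi a ((w.re : ℂ) + (y : ℂ) * I))
        = fun y : ℝ => (myF a ((w.re : ℂ) + (y : ℂ) * I)).im :=
      funext fun y => (my_F_eq a _).symm
    have hd1 : ∀ t : ℝ, HasDerivAt (fun x : ℝ => (myF a ((x : ℂ) + (w.im : ℂ) * I)).im)
        ((deriv (myF a) ((t : ℂ) + (w.im : ℂ) * I)).im) t := fun t =>
      my_slice_x (hF1 _ (hmem1 t))
    have hD1 : deriv (fun x : ℝ => (myF a ((x : ℂ) + (w.im : ℂ) * I)).im)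
        = fun t : ℝ => (deriv (myF a) ((t : ℂ) + (w.im : ℂ) * I)).im :=
      funext fun t => (hd1 t).deriv
    have hd2 : HasDerivAt (fun t : ℝ => (deriv (myF a) ((t : ℂ) + (w.im : ℂ) * I)).im)
        ((deriv (deriv (myF a)) w).im) w.re := by
      apply my_slice_x
      rw [Complex.re_add_im]
      exact hF2 w hw
    have e1 : iteratedDeriv 2 (fun x : ℝ => ImPhi a ((x : ℂ) + (w.im : ℂ) * I)) w.re
        = (deriv (deriv (myF a)) w).im := by
      rw [hg1, iteratedDeriv_succ, iteratedDeriv_one, hD1]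
      exact hd2.deriv
    have hd3 : ∀ t : ℝ, 0 < t → HasDerivAt (fun y : ℝ => (myF a ((w.re : ℂ) + (y : ℂ) * I)).im)
        ((deriv (myF a) ((w.re : ℂ) + (t : ℂ) * I) * I).im) t := fun t ht =>
      my_slice_y (hF1 _ (hmem2 t ht))
    have hev : deriv (fun y : ℝ => (myF a ((w.re : ℂ) + (y : ℂ) * I)).im)
        =ᶠ[nhds w.im] fun t : ℝ => (deriv (myF a) ((w.re : ℂ) + (t : ℂ) * I) * I).im := by
      filter_upwards [isOpen_Ioi.mem_nhds (show w.im ∈ Set.Ioi (0:ℝ) from hw)] with t ht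
      exact (hd3 t ht).deriv
    have hd4 : HasDerivAt (fun t : ℝ => (deriv (myF a) ((w.re : ℂ) + (t : ℂ) * I) * I).im)
        ((deriv (deriv (myF a)) w * I * I).im) w.im := by
      apply my_slice_y (g := fun z => deriv (myF a) z * I)
      rw [Complex.re_add_im]
      exact (hF2 w hw).mul_const I
    have e2 : iteratedDeriv 2 (fun y : ℝ => ImPhi a ((w.re : ℂ) + (y : ℂ) * I)) w.im
        = (deriv (deriv (myF a)) w * I * I).im := by
      rw [hg2, iteratedDeriv_succ, iteratedDeriv_one, hev.deriv_eq]
      exact hd4.deriv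
    rw [e1, e2, mul_assoc, Complex.I_mul_I, mul_neg_one]
    simp
  · -- boundary values
    intro x hxa hxna hxi hxni
    have hna : x - a ≠ 0 := sub_ne_zero.mpr hxa
    have hni : x - a⁻¹ ≠ 0 := sub_ne_zero.mpr hxi
    have hpa : x + a ≠ 0 := fun h => hxna (by linarith [(eq_neg_of_add_eq_zero_left h)])
    have hpi : x + a⁻¹ ≠ 0 := fun h => hxni (by linarith [(eq_neg_of_add_eq_zero_left h)])
    set q1 : ℝ := (x - a⁻¹) / (x - a) with hq1def
    set q2 : ℝ := (x + a) / (x + a⁻¹) with hq2def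
    have hq1ne : q1 ≠ 0 := div_ne_zero hni hna
    have hq2ne : q2 ≠ 0 := div_ne_zero (fun h => hxna (by linarith [(eq_neg_of_add_eq_zero_left h)])) hpi
    have hcna : ((x : ℂ)) - (a : ℂ) ≠ 0 := by
      intro h; apply hna
      have : ((x - a : ℝ) : ℂ) = 0 := by push_cast; exact h
      exact_mod_cast this
    have hcpi : ((x : ℂ)) + (a : ℂ)⁻¹ ≠ 0 := by
      intro h; apply hpi
      have : ((x + a⁻¹ : ℝ) : ℂ) = 0 := by push_cast; exact h
      exact_mod_cast this
    have hT1 : Filter.Tendsto (fun w : ℂ => (w - (a : ℂ)⁻¹) / (w - (a : ℂ)))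
        (nhdsWithin ((x : ℝ) : ℂ) Cplus) (nhds ((q1 : ℝ) : ℂ)) := by
      have hc : ContinuousAt (fun w : ℂ => (w - (a : ℂ)⁻¹) / (w - (a : ℂ))) ((x : ℝ) : ℂ) :=
        ContinuousAt.div (by fun_prop) (by fun_prop) hcna
      have hval : (((x : ℝ) : ℂ) - (a : ℂ)⁻¹) / (((x : ℝ) : ℂ) - (a : ℂ)) = ((q1 : ℝ) : ℂ) := by
        rw [hq1def]; push_cast; ring
      rw [← hval]
      exact hc.continuousWithinAt.tendsto
    have hT2 : Filter.Tendsto (fun w : ℂ => (w + (a : ℂ)) / (w + (a : ℂ)⁻¹))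
        (nhdsWithin ((x : ℝ) : ℂ) Cplus) (nhds ((q2 : ℝ) : ℂ)) := by
      have hc : ContinuousAt (fun w : ℂ => (w + (a : ℂ)) / (w + (a : ℂ)⁻¹)) ((x : ℝ) : ℂ) :=
        ContinuousAt.div (by fun_prop) (by fun_prop) hcpi
      have hval : (((x : ℝ) : ℂ) + (a : ℂ)) / (((x : ℝ) : ℂ) + (a : ℂ)⁻¹) = ((q2 : ℝ) : ℂ) := by
        rw [hq2def]; push_cast; ring
      rw [← hval]
      exact hc.continuousWithinAt.tendsto
    have him1 : ∀ᶠ w in nhdsWithin ((x : ℝ) : ℂ) Cplus,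
        0 ≤ ((w - (a : ℂ)⁻¹) / (w - (a : ℂ))).im := by
      filter_upwards [self_mem_nhdsWithin] with w hw
      exact (my_imQ1_pos ha0 ha1 hw).le
    have him2 : ∀ᶠ w in nhdsWithin ((x : ℝ) : ℂ) Cplus,
        0 ≤ ((w + (a : ℂ)) / (w + (a : ℂ)⁻¹)).im := by
      filter_upwards [self_mem_nhdsWithin] with w hw
      exact (my_imQ2_pos ha0 ha1 hw).le
    have hA1 := my_arg_tendsto hq1ne hT1 him1
    have hA2 := my_arg_tendsto hq2ne hT2 him2
    have hTend : Filter.Tendsto (ImPhi a) (nhdsWithin ((x : ℝ) : ℂ) Cplus)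
        (nhds (Real.pi - (if q1 < 0 then Real.pi else 0) - (if q2 < 0 then Real.pi else 0))) := by
      exact (tendsto_const_nhds.sub hA1).sub hA2
    convert hTend using 2
    have hc1 : q1 < 0 ↔ (a < x ∧ x < a⁻¹) := by
      rw [hq1def, div_neg_iff]
      constructor
      · rintro (⟨h1, h2⟩ | ⟨h1, h2⟩) <;> constructor <;> linarith
      · rintro ⟨h1, h2⟩; right; constructor <;> linarith
    have hc2 : q2 < 0 ↔ (-a⁻¹ < x ∧ x < -a) := by
      rw [hq2def, div_neg_iff]
      constructor
      · rintro (⟨h1, h2⟩ | ⟨h1, h2⟩) <;> constructor <;> linarith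
      · rintro ⟨h1, h2⟩; right; constructor <;> linarith
    simp only [hc1, hc2]
    have hnb : ¬((a < x ∧ x < a⁻¹) ∧ (-a⁻¹ < x ∧ x < -a)) := by
      rintro ⟨⟨u, -⟩, ⟨-, v⟩⟩; linarith
    by_cases hA : a < x ∧ x < a⁻¹ <;> by_cases hB : -a⁻¹ < x ∧ x < -a
    · exact absurd ⟨hA, hB⟩ hnb
    · rw [if_pos (Or.inl hA), if_pos hA, if_neg hB]; ring
    · rw [if_pos (Or.inr hB), if_neg hA, if_pos hB]; ring
    · rw [if_neg (by tauto), if_neg hA, if_neg hB]; ring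
end
end

section
/- (Glaser's theorem, positivity ⇔ holomorphic factorization.) Let M ≥ 1 and, for each n ∈ {1,…,M}, let U_n be a nonempty domain in ℂ^{N_n} (N_n ≥ 1), with U_n* its complex-conjugate domain; set N₀ = 0 so that U₀ is a single point. For each pair n, m ∈ {0,…,M}, let A_{nm} be a holomorphic function on U_n × U_m* (with A₀₀ ∈ ℂ). Then the following are equivalent: (G″.1) for every finite family {(c_{n,l}, t_{n,l}) : c_{n,l} ∈ ℂ, t_{n,l} ∈ U_n, 0 ≤ n ≤ M, 1 ≤ l ≤ L} one has ∑_{n,m=0}^{M} ∑_{l,k=1}^{L} c_{n,l} · conj(c_{m,k}) · A_{nm}(t_{n,l}, conj(t_{m,k})) ≥ 0; and (G.2) there exist a sequence {f_{ν,0}}_{ν∈ℕ} of complex numbers and, for each n ∈ {1,…,M}, a sequence {f_{ν,n}}_{ν∈ℕ} of functions holomorphic in U_n, such that A_{nm}(p_n, q_m) = ∑_{ν∈ℕ} f_{ν,n}(p_n) · conj(f_{ν,m}(conj(q_m))) holds with uniform convergence on every compact subset of U_n × U_m*, for all n, m ∈ {0,…,M}. -/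
noncomputable section
open Complex

/-- Coordinatewise complex conjugation of a vector in `ℂ^K`. -/
def conjVec {K : ℕ} (z : Fin K → ℂ) : Fin K → ℂ := fun i => (starRingEnd ℂ) (z i)

namespace GlaserAux

variable {X : Type*}

/-- The Hermitian form attached to a kernel. -/
def QF (B : X → X → ℂ) (L : ℕ) (c : Fin L → ℂ) (x : Fin L → X) : ℂ :=
  ∑ i, ∑ j, c i * (starRingEnd ℂ) (c j) * B (x i) (x j)

/-- Positive (semi-)definiteness of a kernel. -/
def IsPosKer (B : X → X → ℂ) : Prop :=
  ∀ (L : ℕ) (c : Fin L → ℂ) (x : Fin L → X),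
    (QF B L c x).im = 0 ∧ 0 ≤ (QF B L c x).re

variable {B : X → X → ℂ}

theorem qf_one (a : ℂ) (x : X) : QF B 1 ![a] ![x] = a * (starRingEnd ℂ) a * B x x := by
  simp [QF]

theorem qf_two (a b : ℂ) (x y : X) :
    QF B 2 ![a, b] ![x, y] =
      a * (starRingEnd ℂ) a * B x x + a * (starRingEnd ℂ) b * B x y
      + b * (starRingEnd ℂ) a * B y x + b * (starRingEnd ℂ) b * B y y := by
  simp [QF, Fin.sum_univ_two]
  ring

theorem diag_real (hB : IsPosKer B) (x : X) : (B x x).im = 0 := by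
  have := hB 1 ![1] ![x]
  rw [qf_one] at this
  simpa using this.1

theorem diag_nonneg (hB : IsPosKer B) (x : X) : 0 ≤ (B x x).re := by
  have := hB 1 ![1] ![x]
  rw [qf_one] at this
  simpa using this.2

theorem hermitian (hB : IsPosKer B) (x y : X) : B y x = (starRingEnd ℂ) (B x y) := by
  have h1 := (hB 2 ![1, 1] ![x, y]).1
  have h2 := (hB 2 ![Complex.I, 1] ![x, y]).1
  rw [qf_two] at h1 h2
  have hx := diag_real hB x
  have hy := diag_real hB y
  simp [Complex.add_im, Complex.mul_im, Complex.mul_re] at h1 h2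
  apply Complex.ext <;> simp [Complex.conj_re, Complex.conj_im] <;> nlinarith [h1, h2, hx, hy]

theorem two_nonneg (hB : IsPosKer B) (a b : ℂ) (x y : X) :
    0 ≤ (a * (starRingEnd ℂ) a * B x x + a * (starRingEnd ℂ) b * B x y
      + b * (starRingEnd ℂ) a * B y x + b * (starRingEnd ℂ) b * B y y).re := by
  have := (hB 2 ![a, b] ![x, y]).2
  rwa [qf_two] at this

theorem cauchy_schwarz (hB : IsPosKer B) (x y : X) :
    Complex.normSq (B x y) ≤ (B x x).re * (B y y).re := by
  set u := B x y with hu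
  have key : ∀ s : ℝ, 0 ≤ (Complex.normSq u * (B y y).re) * (s * s)
      + (-2 * Complex.normSq u) * s + (B x x).re := by
    intro s
    have h := two_nonneg hB 1 (-(s : ℂ) * u) x y
    have hyx : B y x = (starRingEnd ℂ) u := hermitian hB x y
    rw [hyx] at h
    have e1 : ((1:ℂ) * (starRingEnd ℂ) 1 * B x x + 1 * (starRingEnd ℂ) (-(s:ℂ) * u) * u
        + (-(s:ℂ) * u) * (starRingEnd ℂ) 1 * (starRingEnd ℂ) u
        + (-(s:ℂ) * u) * (starRingEnd ℂ) (-(s:ℂ) * u) * B y y)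
        = B x x - (s:ℂ) * (u * (starRingEnd ℂ) u) - (s:ℂ) * (u * (starRingEnd ℂ) u)
          + ((s^2 : ℝ):ℂ) * ((u * (starRingEnd ℂ) u)) * B y y := by
      simp only [map_mul, map_neg, map_one, Complex.conj_ofReal]
      push_cast
      ring
    rw [e1, Complex.mul_conj] at h
    simp only [← Complex.ofReal_mul, Complex.sub_re, Complex.add_re, Complex.ofReal_re,
      Complex.re_ofReal_mul] at h
    nlinarith [h]
  have hdis := discrim_le_zero key
  rw [discrim] at hdis
  
  have hxx := diag_nonneg hB x
  have hyy := diag_nonneg hB y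
  have hnsq := Complex.normSq_nonneg u
  rcases eq_or_lt_of_le hnsq with h0 | h0
  · rw [← h0]; positivity
  · nlinarith [hdis, h0, hxx, hyy]

theorem dker_nonneg (hB : IsPosKer B) (x y : X) :
    0 ≤ (B x x).re - (B x y).re - (B y x).re + (B y y).re := by
  have h := two_nonneg hB 1 (-1) x y
  simp only [map_one, map_neg, mul_one, one_mul, mul_neg, neg_mul, neg_neg,
    Complex.add_re, Complex.neg_re] at h
  linarith [h]

/-- real algebra: `√a ≤ √b + √c` given `c = a - 2ru + b`, `ru^2 ≤ a*b`. -/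
theorem sqrt_tri {a b c ru : ℝ} (ha : 0 ≤ a) (hb : 0 ≤ b) (hc : 0 ≤ c)
    (hceq : c = a - 2 * ru + b) (hcs : ru ^ 2 ≤ a * b) :
    Real.sqrt a ≤ Real.sqrt b + Real.sqrt c := by
  have h1 : a ≤ (Real.sqrt b + Real.sqrt c) ^ 2 := by
    have hbc : Real.sqrt b * Real.sqrt c = Real.sqrt (b * c) := (Real.sqrt_mul hb c).symm
    have h2 : (Real.sqrt b + Real.sqrt c) ^ 2 = b + c + 2 * Real.sqrt (b * c) := by
      rw [add_sq, Real.sq_sqrt hb, Real.sq_sqrt hc, mul_assoc, hbc]; ring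
    rw [h2]
    rcases le_or_gt ru b with h | h
    · have := Real.sqrt_nonneg (b * c); linarith
    · have hkey : (ru - b) ^ 2 ≤ b * c := by nlinarith
      have := (Real.le_sqrt (by linarith : (0:ℝ) ≤ ru - b) (by positivity)).mpr hkey
      linarith
  calc Real.sqrt a ≤ Real.sqrt ((Real.sqrt b + Real.sqrt c) ^ 2) := Real.sqrt_le_sqrt h1
    _ = Real.sqrt b + Real.sqrt c := by
        rw [Real.sqrt_sq (by positivity)]

/-- Triangle inequality for the diagonal of a positive kernel. -/
theorem diag_tri (hB : IsPosKer B) (x y : X) :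
    Real.sqrt (B x x).re ≤ Real.sqrt (B y y).re
      + Real.sqrt ((B x x).re - (B x y).re - (B y x).re + (B y y).re) := by
  have hxyre : (B y x).re = (B x y).re := by rw [hermitian hB x y]; simp
  refine sqrt_tri (ru := (B x y).re) (diag_nonneg hB x) (diag_nonneg hB y) (dker_nonneg hB x y) ?_ ?_
  · rw [hxyre]; ring
  · have h := cauchy_schwarz hB x y
    have : (B x y).re ^ 2 ≤ Complex.normSq (B x y) := by
      rw [Complex.normSq_apply]; nlinarith [sq_nonneg (B x y).im]
    linarith
theorem schur_step (hB : IsPosKer B) (z : X) (hz : (B z z).re ≠ 0) :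
    IsPosKer (fun p q => B p q
      - (B p z / (Real.sqrt (B z z).re : ℂ)) * (starRingEnd ℂ) (B q z / (Real.sqrt (B z z).re : ℂ))) := by
  have hd : 0 < (B z z).re := lt_of_le_of_ne (diag_nonneg hB z) (Ne.symm hz)
  set d := (B z z).re with hdd
  have hdne : ((d:ℝ):ℂ) ≠ 0 := by exact_mod_cast hd.ne'
  have hsne : ((Real.sqrt d : ℝ):ℂ) ≠ 0 := by exact_mod_cast (Real.sqrt_pos.mpr hd).ne'
  have hsq : (Real.sqrt d : ℂ) * (Real.sqrt d : ℂ) = (d : ℂ) := by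
    rw [← Complex.ofReal_mul, Real.mul_self_sqrt hd.le]
  have hzz : B z z = (d : ℂ) := by
    apply Complex.ext <;> simp [diag_real hB z, hdd]
  intro L c x
  set S := ∑ i, c i * B (x i) z with hS
  set γ := -(S / (d : ℂ)) with hγ
  have hconjS : (starRingEnd ℂ) S * S = ((Complex.normSq S : ℝ) : ℂ) := by
    rw [mul_comm, Complex.mul_conj]
  have hu : ∑ i, c i * (starRingEnd ℂ) γ * B (x i) z = (starRingEnd ℂ) γ * S := by
    rw [hS, Finset.mul_sum]
    exact Finset.sum_congr rfl (fun i _ => by ring)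
  have hv : ∑ j, γ * (starRingEnd ℂ) (c j) * B z (x j) = γ * (starRingEnd ℂ) S := by
    rw [hS, map_sum, Finset.mul_sum]
    refine Finset.sum_congr rfl (fun j _ => ?_)
    rw [hermitian hB (x j) z, map_mul]
    ring
  have hsnoc : QF B (L+1) (Fin.snoc c γ) (Fin.snoc x z)
      = QF B L c x + (starRingEnd ℂ) γ * S + γ * (starRingEnd ℂ) S
        + γ * (starRingEnd ℂ) γ * (d:ℂ) := by
    unfold QF
    simp only [Fin.sum_univ_castSucc, Fin.snoc_castSucc, Fin.snoc_last]
    rw [Finset.sum_add_distrib, hu, hv, hzz]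
    ring
  have hval : (starRingEnd ℂ) γ * S + γ * (starRingEnd ℂ) S + γ * (starRingEnd ℂ) γ * (d:ℂ)
      = -((Complex.normSq S / d : ℝ) : ℂ) := by
    rw [hγ, map_neg, map_div₀, Complex.conj_ofReal]
    push_cast
    field_simp
    linear_combination (-1 : ℂ) * hconjS
  have hlhs : QF (fun p q => B p q
      - (B p z / (Real.sqrt d : ℂ)) * (starRingEnd ℂ) (B q z / (Real.sqrt d : ℂ))) L c x
      = QF B L c x - ((Complex.normSq S / d : ℝ) : ℂ) := by
    unfold QF
    have hterm : ∀ i j : Fin L, c i * (starRingEnd ℂ) (c j) * (B (x i) (x j)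
        - (B (x i) z / (Real.sqrt d : ℂ)) * (starRingEnd ℂ) (B (x j) z / (Real.sqrt d : ℂ)))
        = c i * (starRingEnd ℂ) (c j) * B (x i) (x j)
          - (c i * B (x i) z) * (starRingEnd ℂ) (c j * B (x j) z) / ((d:ℝ):ℂ) := by
      intro i j
      simp only [map_div₀, map_mul, Complex.conj_ofReal]
      field_simp
      ring_nf
      rw [show ((Real.sqrt d : ℝ):ℂ)^2 = ((d:ℝ):ℂ) from by rw [sq, hsq]]
      ring
    simp only [hterm]
    simp only [Finset.sum_sub_distrib]
    congr 1
    have hsum : ∑ i, ∑ j, (c i * B (x i) z) * (starRingEnd ℂ) (c j * B (x j) z)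
        = S * (starRingEnd ℂ) S := by
      rw [hS, map_sum, Finset.sum_mul_sum]
    simp only [← Finset.sum_div]
    rw [hsum, Complex.mul_conj]
    push_cast
    ring
  have hfin : QF (fun p q => B p q
      - (B p z / (Real.sqrt d : ℂ)) * (starRingEnd ℂ) (B q z / (Real.sqrt d : ℂ))) L c x
      = QF B (L+1) (Fin.snoc c γ) (Fin.snoc x z) := by
    rw [hlhs, hsnoc]
    linear_combination -hval
  rw [hfin]
  exact hB _ _ _

theorem isPosKer_congr {B B' : X → X → ℂ} (h : ∀ p q, B p q = B' p q) (hB : IsPosKer B) :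
    IsPosKer B' := by
  intro L c x
  have : QF B' L c x = QF B L c x := by
    unfold QF
    exact Finset.sum_congr rfl fun i _ => Finset.sum_congr rfl fun j _ => by rw [h]
  rw [this]; exact hB L c x

end GlaserAux

namespace GlaserAux

variable {M : ℕ} {N : Fin (M+1) → ℕ}

/-- The new factor function extracted from a remainder kernel `R` at a point `z`. -/
def newf (U : (n : Fin (M+1)) → Set (Fin (N n) → ℂ))
    (R : (n m : Fin (M+1)) → (Fin (N n) → ℂ) → (Fin (N m) → ℂ) → ℂ)
    (z : Σ n : Fin (M+1), {p : Fin (N n) → ℂ // p ∈ U n}) :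
    (n : Fin (M+1)) → (Fin (N n) → ℂ) → ℂ :=
  fun n p =>
    if (R z.1 z.1 z.2.1 z.2.1).re = 0 then 0
    else R n z.1 p z.2.1 / (Real.sqrt ((R z.1 z.1 z.2.1 z.2.1).re) : ℂ)

/-- Remainder kernels of the greedy Gram–Schmidt/Cholesky process. -/
def RR (U : (n : Fin (M+1)) → Set (Fin (N n) → ℂ))
    (A : (n m : Fin (M+1)) → (Fin (N n) → ℂ) → (Fin (N m) → ℂ) → ℂ)
    (x : ℕ → Σ n : Fin (M+1), {p : Fin (N n) → ℂ // p ∈ U n}) :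
    ℕ → (n m : Fin (M+1)) → (Fin (N n) → ℂ) → (Fin (N m) → ℂ) → ℂ
  | 0 => fun n m p q => A n m p (conjVec q)
  | (k+1) => fun n m p q =>
      RR U A x k n m p q
      - newf U (RR U A x k) (x k) n p * (starRingEnd ℂ) (newf U (RR U A x k) (x k) m q)

/-- The factor functions. -/
def ff (U : (n : Fin (M+1)) → Set (Fin (N n) → ℂ))
    (A : (n m : Fin (M+1)) → (Fin (N n) → ℂ) → (Fin (N m) → ℂ) → ℂ)
    (x : ℕ → Σ n : Fin (M+1), {p : Fin (N n) → ℂ // p ∈ U n}) (k : ℕ) :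
    (n : Fin (M+1)) → (Fin (N n) → ℂ) → ℂ :=
  newf U (RR U A x k) (x k)

/-- The kernel on the disjoint union of the domains. -/
def Bker (U : (n : Fin (M+1)) → Set (Fin (N n) → ℂ))
    (A : (n m : Fin (M+1)) → (Fin (N n) → ℂ) → (Fin (N m) → ℂ) → ℂ)
    (x : ℕ → Σ n : Fin (M+1), {p : Fin (N n) → ℂ // p ∈ U n}) (k : ℕ) :
    (Σ n : Fin (M+1), {p : Fin (N n) → ℂ // p ∈ U n}) →
    (Σ n : Fin (M+1), {p : Fin (N n) → ℂ // p ∈ U n}) → ℂ :=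
  fun a b => RR U A x k a.1 b.1 a.2.1 b.2.1

variable {U : (n : Fin (M+1)) → Set (Fin (N n) → ℂ)}
  {A : (n m : Fin (M+1)) → (Fin (N n) → ℂ) → (Fin (N m) → ℂ) → ℂ}
  {x : ℕ → Σ n : Fin (M+1), {p : Fin (N n) → ℂ // p ∈ U n}}

theorem RR_eq_sub (k : ℕ) (n m : Fin (M+1)) (p : Fin (N n) → ℂ) (q : Fin (N m) → ℂ) :
    RR U A x k n m p q = A n m p (conjVec q)
      - ∑ ν ∈ Finset.range k, ff U A x ν n p * (starRingEnd ℂ) (ff U A x ν m q) := by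
  induction k with
  | zero => simp [RR]
  | succ k ih =>
      rw [Finset.sum_range_succ]
      show RR U A x k n m p q - _ = _
      rw [ih, ff]
      ring

theorem isPosKer_Bker (hP0 : IsPosKer (Bker U A x 0)) (k : ℕ) : IsPosKer (Bker U A x k) := by
  induction k with
  | zero => exact hP0
  | succ k ih =>
      by_cases hd : (RR U A x k (x k).1 (x k).1 (x k).2.1 (x k).2.1).re = 0
      · refine isPosKer_congr (B := Bker U A x k) (fun a b => ?_) ih
        show Bker U A x k a b = Bker U A x k a b
          - newf U (RR U A x k) (x k) a.1 a.2.1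
            * (starRingEnd ℂ) (newf U (RR U A x k) (x k) b.1 b.2.1)
        simp only [newf, if_pos hd]
        simp
      · have hd' : (Bker U A x k (x k) (x k)).re ≠ 0 := hd
        refine isPosKer_congr (B := fun a b => Bker U A x k a b
          - (Bker U A x k a (x k) / (Real.sqrt ((Bker U A x k (x k) (x k)).re) : ℂ))
            * (starRingEnd ℂ) (Bker U A x k b (x k) / (Real.sqrt ((Bker U A x k (x k) (x k)).re) : ℂ)))
          (fun a b => ?_) (schur_step ih (x k) hd')
        show Bker U A x k a b
          - (Bker U A x k a (x k) / (Real.sqrt ((Bker U A x k (x k) (x k)).re) : ℂ))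
            * (starRingEnd ℂ) (Bker U A x k b (x k) / (Real.sqrt ((Bker U A x k (x k) (x k)).re) : ℂ))
          = Bker U A x k a b
          - newf U (RR U A x k) (x k) a.1 a.2.1
            * (starRingEnd ℂ) (newf U (RR U A x k) (x k) b.1 b.2.1)
        simp only [newf, if_neg hd]
        rfl

theorem Bker_vanish (hP0 : IsPosKer (Bker U A x 0)) :
    ∀ k j, j < k → ∀ a, Bker U A x k a (x j) = 0 := by
  intro k
  induction k with
  | zero => intro j hj; omega
  | succ k ih =>
      intro j hj a
      have hpos := isPosKer_Bker hP0 k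
      rcases Nat.lt_succ_iff_lt_or_eq.mp hj with h | h
      · -- j < k
        have h1 : Bker U A x k a (x j) = 0 := ih j h a
        have h2 : newf U (RR U A x k) (x k) (x j).1 (x j).2.1 = 0 := by
          by_cases hd : (RR U A x k (x k).1 (x k).1 (x k).2.1 (x k).2.1).re = 0
          · simp only [newf, if_pos hd]
          · simp only [newf, if_neg hd]
            have : RR U A x k (x j).1 (x k).1 (x j).2.1 (x k).2.1
                = Bker U A x k (x j) (x k) := rfl
            rw [this, hermitian hpos (x k) (x j), ih j h (x k)]
            simp
        show Bker U A x k a (x j)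
          - newf U (RR U A x k) (x k) a.1 a.2.1
            * (starRingEnd ℂ) (newf U (RR U A x k) (x k) (x j).1 (x j).2.1) = 0
        rw [h1, h2]
        simp
      · -- j = k
        subst h
        by_cases hd : (RR U A x j (x j).1 (x j).1 (x j).2.1 (x j).2.1).re = 0
        · have hcs := cauchy_schwarz hpos a (x j)
          have hzero : Bker U A x j a (x j) = 0 := by
            have hd' : (Bker U A x j (x j) (x j)).re = 0 := hd
            rw [hd', mul_zero] at hcs
            exact Complex.normSq_eq_zero.mp (le_antisymm hcs (Complex.normSq_nonneg _))
          show Bker U A x j a (x j)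
            - newf U (RR U A x j) (x j) a.1 a.2.1
              * (starRingEnd ℂ) (newf U (RR U A x j) (x j) (x j).1 (x j).2.1) = 0
          simp only [newf, if_pos hd]
          rw [hzero]; simp
        · have hdpos : 0 < (Bker U A x j (x j) (x j)).re :=
            lt_of_le_of_ne (diag_nonneg hpos (x j)) (Ne.symm hd)
          set d := (Bker U A x j (x j) (x j)).re with hdd
          have hsne : ((Real.sqrt d : ℝ):ℂ) ≠ 0 := by
            exact_mod_cast (Real.sqrt_pos.mpr hdpos).ne'
          have hsq : ((Real.sqrt d : ℝ):ℂ) * ((Real.sqrt d : ℝ):ℂ) = (d : ℂ) := by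
            rw [← Complex.ofReal_mul, Real.mul_self_sqrt hdpos.le]
          have hzz : Bker U A x j (x j) (x j) = (d : ℂ) := by
            apply Complex.ext <;> simp [diag_real hpos (x j), hdd]
          show Bker U A x j a (x j)
            - newf U (RR U A x j) (x j) a.1 a.2.1
              * (starRingEnd ℂ) (newf U (RR U A x j) (x j) (x j).1 (x j).2.1) = 0
          simp only [newf, if_neg hd]
          have e1 : RR U A x j a.1 (x j).1 a.2.1 (x j).2.1 = Bker U A x j a (x j) := rfl
          have e2 : RR U A x j (x j).1 (x j).1 (x j).2.1 (x j).2.1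
              = Bker U A x j (x j) (x j) := rfl
          rw [e1, e2, hzz]
          rw [map_div₀, Complex.conj_ofReal, Complex.conj_ofReal]
          rw [Complex.ofReal_re]
          field_simp
          linear_combination (Bker U A x j a (x j)) * hsq

theorem RR_diff
    (hA : ∀ n m, DifferentiableOn ℂ
      (fun pq : (Fin (N n) → ℂ) × (Fin (N m) → ℂ) => A n m pq.1 pq.2)
      ((U n) ×ˢ (conjVec '' U m))) :
    ∀ (k : ℕ) (n m : Fin (M+1)) (q : Fin (N m) → ℂ), q ∈ U m →
      DifferentiableOn ℂ (fun p => RR U A x k n m p q) (U n) := by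
  intro k
  induction k with
  | zero =>
      intro n m q hq
      show DifferentiableOn ℂ (fun p => A n m p (conjVec q)) (U n)
      have := (hA n m).comp (f := fun p : Fin (N n) → ℂ => (p, conjVec q))
        ((differentiable_id.prodMk (differentiable_const _)).differentiableOn)
        (fun p hp => ⟨hp, ⟨q, hq, rfl⟩⟩)
      exact this
  | succ k ih =>
      intro n m q hq
      show DifferentiableOn ℂ (fun p => RR U A x k n m p q
        - newf U (RR U A x k) (x k) n p
          * (starRingEnd ℂ) (newf U (RR U A x k) (x k) m q)) (U n)
      refine (ih n m q hq).sub ?_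
      refine DifferentiableOn.mul ?_ (differentiableOn_const _)
      by_cases hd : (RR U A x k (x k).1 (x k).1 (x k).2.1 (x k).2.1).re = 0
      · have : newf U (RR U A x k) (x k) n = (fun _ => (0:ℂ)) := by
          funext p; simp only [newf, if_pos hd]
        rw [this]
        exact differentiableOn_const _
      · have : newf U (RR U A x k) (x k) n
            = (fun p => RR U A x k n (x k).1 p (x k).2.1
              * ((Real.sqrt ((RR U A x k (x k).1 (x k).1 (x k).2.1 (x k).2.1).re) : ℂ))⁻¹) := by
          funext p; simp only [newf, if_neg hd, div_eq_mul_inv]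
        rw [this]
        exact (ih n (x k).1 (x k).2.1 (x k).2.2).mul (differentiableOn_const _)


theorem ff_diff_on
    (hA : ∀ n m, DifferentiableOn ℂ
      (fun pq : (Fin (N n) → ℂ) × (Fin (N m) → ℂ) => A n m pq.1 pq.2)
      ((U n) ×ˢ (conjVec '' U m))) (ν : ℕ) (n : Fin (M+1)) :
    DifferentiableOn ℂ (ff U A x ν n) (U n) := by
  show DifferentiableOn ℂ (newf U (RR U A x ν) (x ν) n) (U n)
  by_cases hd : (RR U A x ν (x ν).1 (x ν).1 (x ν).2.1 (x ν).2.1).re = 0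
  · have : newf U (RR U A x ν) (x ν) n = (fun _ => (0:ℂ)) := by
      funext p; simp only [newf, if_pos hd]
    rw [this]
    exact differentiableOn_const _
  · have : newf U (RR U A x ν) (x ν) n
        = (fun p => RR U A x ν n (x ν).1 p (x ν).2.1
          * ((Real.sqrt ((RR U A x ν (x ν).1 (x ν).1 (x ν).2.1 (x ν).2.1).re) : ℂ))⁻¹) := by
      funext p; simp only [newf, if_neg hd, div_eq_mul_inv]
    rw [this]
    exact (RR_diff hA ν n (x ν).1 (x ν).2.1 (x ν).2.2).mul (differentiableOn_const _)

theorem diag_diff_le (k : ℕ) (a b : Σ n : Fin (M+1), {p : Fin (N n) → ℂ // p ∈ U n}) :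
    (Bker U A x k a a).re - (Bker U A x k a b).re - (Bker U A x k b a).re
      + (Bker U A x k b b).re
    ≤ (Bker U A x 0 a a).re - (Bker U A x 0 a b).re - (Bker U A x 0 b a).re
      + (Bker U A x 0 b b).re := by
  have key : ∀ u v : Σ n : Fin (M+1), {p : Fin (N n) → ℂ // p ∈ U n},
      Bker U A x k u v = Bker U A x 0 u v
        - ∑ ν ∈ Finset.range k, ff U A x ν u.1 u.2.1
            * (starRingEnd ℂ) (ff U A x ν v.1 v.2.1) := by
    intro u v
    have h0 : Bker U A x 0 u v = A u.1 v.1 u.2.1 (conjVec v.2.1) := rfl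
    rw [h0]
    exact RR_eq_sub k u.1 v.1 u.2.1 v.2.1
  have hid : (Bker U A x 0 a a - Bker U A x 0 a b - Bker U A x 0 b a + Bker U A x 0 b b)
      - (Bker U A x k a a - Bker U A x k a b - Bker U A x k b a + Bker U A x k b b)
      = ∑ ν ∈ Finset.range k,
          (ff U A x ν a.1 a.2.1 - ff U A x ν b.1 b.2.1)
          * (starRingEnd ℂ) (ff U A x ν a.1 a.2.1 - ff U A x ν b.1 b.2.1) := by
    rw [key a a, key a b, key b a, key b b]
    have : ∀ w : ℂ, (Bker U A x 0 a a - Bker U A x 0 a b - Bker U A x 0 b a + Bker U A x 0 b b)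
        - (Bker U A x 0 a a - w - (Bker U A x 0 a b - w) - (Bker U A x 0 b a - w)
          + (Bker U A x 0 b b - w)) = 0 := by intro w; ring
    calc (Bker U A x 0 a a - Bker U A x 0 a b - Bker U A x 0 b a + Bker U A x 0 b b)
        - (Bker U A x 0 a a - ∑ ν ∈ Finset.range k, ff U A x ν a.1 a.2.1 * (starRingEnd ℂ) (ff U A x ν a.1 a.2.1)
          - (Bker U A x 0 a b - ∑ ν ∈ Finset.range k, ff U A x ν a.1 a.2.1 * (starRingEnd ℂ) (ff U A x ν b.1 b.2.1))
          - (Bker U A x 0 b a - ∑ ν ∈ Finset.range k, ff U A x ν b.1 b.2.1 * (starRingEnd ℂ) (ff U A x ν a.1 a.2.1))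
          + (Bker U A x 0 b b - ∑ ν ∈ Finset.range k, ff U A x ν b.1 b.2.1 * (starRingEnd ℂ) (ff U A x ν b.1 b.2.1)))
        = (∑ ν ∈ Finset.range k, ff U A x ν a.1 a.2.1 * (starRingEnd ℂ) (ff U A x ν a.1 a.2.1))
          - (∑ ν ∈ Finset.range k, ff U A x ν a.1 a.2.1 * (starRingEnd ℂ) (ff U A x ν b.1 b.2.1))
          - (∑ ν ∈ Finset.range k, ff U A x ν b.1 b.2.1 * (starRingEnd ℂ) (ff U A x ν a.1 a.2.1))
          + (∑ ν ∈ Finset.range k, ff U A x ν b.1 b.2.1 * (starRingEnd ℂ) (ff U A x ν b.1 b.2.1)) := by ring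
      _ = _ := by
          rw [← Finset.sum_sub_distrib, ← Finset.sum_sub_distrib, ← Finset.sum_add_distrib]
          refine Finset.sum_congr rfl fun ν _ => ?_
          rw [map_sub]
          ring
  have hre : 0 ≤ ((Bker U A x 0 a a - Bker U A x 0 a b - Bker U A x 0 b a + Bker U A x 0 b b)
      - (Bker U A x k a a - Bker U A x k a b - Bker U A x k b a + Bker U A x k b b)).re := by
    rw [hid, Complex.re_sum]
    refine Finset.sum_nonneg fun ν _ => ?_
    rw [Complex.mul_conj]
    simp [Complex.normSq_nonneg]
  simp only [Complex.sub_re, Complex.add_re] at hre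
  linarith


theorem isPosKer_base (hUne : ∀ n, (U n).Nonempty)
    (hpos : ∀ (L : ℕ) (c : Fin (M+1) → Fin L → ℂ)
        (t : (n : Fin (M+1)) → Fin L → (Fin (N n) → ℂ)),
        (∀ n l, t n l ∈ U n) →
        ((∑ n, ∑ m, ∑ l, ∑ k,
            c n l * (starRingEnd ℂ) (c m k) * A n m (t n l) (conjVec (t m k))).im = 0 ∧
         0 ≤ (∑ n, ∑ m, ∑ l, ∑ k,
            c n l * (starRingEnd ℂ) (c m k) * A n m (t n l) (conjVec (t m k))).re)) :
    IsPosKer (Bker U A x 0) := by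
  classical
  intro L c xx
  set t : (n : Fin (M+1)) → Fin L → (Fin (N n) → ℂ) := fun n l =>
    if h : (xx l).1 = n then h ▸ ((xx l).2 : Fin (N (xx l).1) → ℂ) else (hUne n).choose
    with ht_def
  set cc : Fin (M+1) → Fin L → ℂ := fun n l => if (xx l).1 = n then c l else 0 with hcc_def
  have ht : ∀ n l, t n l ∈ U n := by
    intro n l
    by_cases h : (xx l).1 = n
    · simp only [ht_def, dif_pos h]
      subst h
      exact ((xx l).2).2
    · simp only [ht_def, dif_neg h]
      exact (hUne n).choose_spec
  have h := hpos L cc t ht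
  have key : (∑ n, ∑ m, ∑ l, ∑ k,
      cc n l * (starRingEnd ℂ) (cc m k) * A n m (t n l) (conjVec (t m k)))
      = QF (Bker U A x 0) L c xx := by
    have inner : ∀ l k : Fin L, (∑ n, ∑ m,
        cc n l * (starRingEnd ℂ) (cc m k) * A n m (t n l) (conjVec (t m k)))
        = c l * (starRingEnd ℂ) (c k) * Bker U A x 0 (xx l) (xx k) := by
      intro l k
      rw [Finset.sum_eq_single ((xx l).1)]
      · rw [Finset.sum_eq_single ((xx k).1)]
        · have e1 : cc (xx l).1 l = c l := by simp [hcc_def]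
          have e2 : cc (xx k).1 k = c k := by simp [hcc_def]
          have e3 : t (xx l).1 l = ((xx l).2 : Fin (N (xx l).1) → ℂ) := by
            simp only [ht_def, dif_pos rfl]
          have e4 : t (xx k).1 k = ((xx k).2 : Fin (N (xx k).1) → ℂ) := by
            simp only [ht_def, dif_pos rfl]
          rw [e1, e2, e3, e4]
          rfl
        · intro m _ hm
          have : cc m k = 0 := by simp [hcc_def, Ne.symm hm]
          rw [this]
          simp
        · intro habs; exact absurd (Finset.mem_univ _) habs
      · intro n _ hn
        have : cc n l = 0 := by simp [hcc_def, Ne.symm hn]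
        rw [this]
        refine Finset.sum_eq_zero fun m _ => by simp
      · intro habs; exact absurd (Finset.mem_univ _) habs
    calc (∑ n, ∑ m, ∑ l, ∑ k,
        cc n l * (starRingEnd ℂ) (cc m k) * A n m (t n l) (conjVec (t m k)))
        = ∑ n, ∑ l, ∑ m, ∑ k,
            cc n l * (starRingEnd ℂ) (cc m k) * A n m (t n l) (conjVec (t m k)) :=
          Finset.sum_congr rfl fun n _ => Finset.sum_comm
      _ = ∑ l, ∑ n, ∑ m, ∑ k,
            cc n l * (starRingEnd ℂ) (cc m k) * A n m (t n l) (conjVec (t m k)) :=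
          Finset.sum_comm
      _ = ∑ l, ∑ n, ∑ k, ∑ m,
            cc n l * (starRingEnd ℂ) (cc m k) * A n m (t n l) (conjVec (t m k)) :=
          Finset.sum_congr rfl fun l _ => Finset.sum_congr rfl fun n _ => Finset.sum_comm
      _ = ∑ l, ∑ k, ∑ n, ∑ m,
            cc n l * (starRingEnd ℂ) (cc m k) * A n m (t n l) (conjVec (t m k)) :=
          Finset.sum_congr rfl fun l _ => Finset.sum_comm
      _ = ∑ l, ∑ k, c l * (starRingEnd ℂ) (c k) * Bker U A x 0 (xx l) (xx k) :=
          Finset.sum_congr rfl fun l _ => Finset.sum_congr rfl fun k _ => inner l k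
      _ = QF (Bker U A x 0) L c xx := rfl
  rw [key] at h
  exact h

end GlaserAux

open GlaserAux in
/-- Glaser's theorem 1, (G″.1) ⇔ (G.2): for a finite sequence of domains
`U_n ⊆ ℂ^{N_n}` (with `N₀ = 0`, so `U₀` is a point) and holomorphic kernels
`A_{nm}` on `U_n × U_m*`, positivity of all finite Hermitian forms built from the
`A_{nm}` is equivalent to a holomorphic factorization
`A_{nm}(p,q) = ∑_ν f_{ν,n}(p) conj(f_{ν,m}(conj q))`, uniformly on compacts. -/
theorem stmt15 (M : ℕ) (hM : 1 ≤ M) (N : Fin (M+1) → ℕ)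
    (hN0 : N 0 = 0) (hN : ∀ n : Fin (M+1), n ≠ 0 → 1 ≤ N n)
    (U : (n : Fin (M+1)) → Set (Fin (N n) → ℂ))
    (hUopen : ∀ n, IsOpen (U n)) (hUconn : ∀ n, IsConnected (U n))
    (A : (n m : Fin (M+1)) → (Fin (N n) → ℂ) → (Fin (N m) → ℂ) → ℂ)
    (hA : ∀ n m, DifferentiableOn ℂ
      (fun pq : (Fin (N n) → ℂ) × (Fin (N m) → ℂ) => A n m pq.1 pq.2)
      ((U n) ×ˢ (conjVec '' U m))) :
    ((∀ (L : ℕ) (c : Fin (M+1) → Fin L → ℂ)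
        (t : (n : Fin (M+1)) → Fin L → (Fin (N n) → ℂ)),
        (∀ n l, t n l ∈ U n) →
        ((∑ n, ∑ m, ∑ l, ∑ k,
            c n l * (starRingEnd ℂ) (c m k) * A n m (t n l) (conjVec (t m k))).im = 0 ∧
         0 ≤ (∑ n, ∑ m, ∑ l, ∑ k,
            c n l * (starRingEnd ℂ) (c m k) * A n m (t n l) (conjVec (t m k))).re))
      ↔
      (∃ f : ℕ → (n : Fin (M+1)) → (Fin (N n) → ℂ) → ℂ,
        (∀ ν n, DifferentiableOn ℂ (f ν n) (U n)) ∧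
        ∀ n m (K : Set ((Fin (N n) → ℂ) × (Fin (N m) → ℂ))),
          IsCompact K → K ⊆ (U n) ×ˢ (conjVec '' U m) →
          TendstoUniformlyOn
            (fun k (pq : (Fin (N n) → ℂ) × (Fin (N m) → ℂ)) =>
              ∑ ν ∈ Finset.range k, f ν n pq.1 * (starRingEnd ℂ) (f ν m (conjVec pq.2)))
            (fun pq => A n m pq.1 pq.2) Filter.atTop K)) := by
  classical
  constructor
  · intro hpos
    have hUne : ∀ n, (U n).Nonempty := fun n => (hUconn n).nonempty
    let y : (n : Fin (M+1)) → ℕ → ↥(U n) := fun n =>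
      letI := (hUne n).to_subtype
      TopologicalSpace.denseSeq ↥(U n)
    have hy : ∀ n, DenseRange (y n) := fun n =>
      letI := (hUne n).to_subtype
      TopologicalSpace.denseRange_denseSeq ↥(U n)
    obtain ⟨σ, hσ⟩ := exists_surjective_nat ((n : Fin (M+1)) × ℕ)
    set x : ℕ → Σ n : Fin (M+1), {p : Fin (N n) → ℂ // p ∈ U n} :=
      fun k => ⟨(σ k).1, y (σ k).1 (σ k).2⟩ with hxdef
    have hP0 : IsPosKer (Bker U A x 0) := isPosKer_base hUne hpos
    have hPk : ∀ k, IsPosKer (Bker U A x k) := isPosKer_Bker hP0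
    have hconj2 : ∀ {K : ℕ} (z : Fin K → ℂ), conjVec (conjVec z) = z := by
      intro K z; funext i; simp [conjVec]
    have hconjCont : ∀ K : ℕ, Continuous (conjVec (K := K)) := fun K =>
      continuous_pi fun i => Complex.continuous_conj.comp (continuous_apply i)
    have hAc : ∀ n m, ContinuousOn
        (fun pq : (Fin (N n) → ℂ) × (Fin (N m) → ℂ) => A n m pq.1 pq.2)
        ((U n) ×ˢ (conjVec '' U m)) := fun n m => (hA n m).continuousOn
    set E : (n : Fin (M+1)) → (Fin (N n) → ℂ) → (Fin (N n) → ℂ) → ℝ := fun n p q =>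
      (A n n p (conjVec p) - A n n p (conjVec q) - A n n q (conjVec p)
        + A n n q (conjVec q)).re with hEdef
    -- continuity of E in each argument
    have hEc1 : ∀ n (q : Fin (N n) → ℂ), q ∈ U n →
        ContinuousOn (fun p => E n p q) (U n) := by
      intro n q hq
      refine Complex.continuous_re.comp_continuousOn ?_
      have c1 : ContinuousOn (fun p => A n n p (conjVec p)) (U n) :=
        (hAc n n).comp ((continuous_id.prodMk (hconjCont _)).continuousOn)
          (fun p hp => ⟨hp, ⟨p, hp, rfl⟩⟩)
      have c2 : ContinuousOn (fun p => A n n p (conjVec q)) (U n) :=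
        (hAc n n).comp ((continuous_id.prodMk continuous_const).continuousOn)
          (fun p hp => ⟨hp, ⟨q, hq, rfl⟩⟩)
      have c3 : ContinuousOn (fun p => A n n q (conjVec p)) (U n) :=
        (hAc n n).comp ((continuous_const.prodMk (hconjCont _)).continuousOn)
          (fun p hp => ⟨hq, ⟨p, hp, rfl⟩⟩)
      exact ((c1.sub c2).sub c3).add continuousOn_const
    have hEc2 : ∀ n (p : Fin (N n) → ℂ), p ∈ U n →
        ContinuousOn (fun q => E n p q) (U n) := by
      intro n p hp
      refine Complex.continuous_re.comp_continuousOn ?_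
      have c2 : ContinuousOn (fun q => A n n p (conjVec q)) (U n) :=
        (hAc n n).comp ((continuous_const.prodMk (hconjCont _)).continuousOn)
          (fun q hq => ⟨hp, ⟨q, hq, rfl⟩⟩)
      have c3 : ContinuousOn (fun q => A n n q (conjVec p)) (U n) :=
        (hAc n n).comp ((continuous_id.prodMk continuous_const).continuousOn)
          (fun q hq => ⟨hq, ⟨p, hp, rfl⟩⟩)
      have c4 : ContinuousOn (fun q => A n n q (conjVec q)) (U n) :=
        (hAc n n).comp ((continuous_id.prodMk (hconjCont _)).continuousOn)
          (fun q hq => ⟨hq, ⟨q, hq, rfl⟩⟩)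
      exact ((continuousOn_const.sub c2).sub c3).add c4
    have hEdiag : ∀ n (p : Fin (N n) → ℂ), E n p p = 0 := by
      intro n p
      rw [hEdef]
      ring_nf
      simp
    -- identification of E with the level-0 kernel double difference
    have hEker : ∀ n p (hp : p ∈ U n) q (hq : q ∈ U n),
        E n p q = (Bker U A x 0 ⟨n,⟨p,hp⟩⟩ ⟨n,⟨p,hp⟩⟩).re
          - (Bker U A x 0 ⟨n,⟨p,hp⟩⟩ ⟨n,⟨q,hq⟩⟩).re
          - (Bker U A x 0 ⟨n,⟨q,hq⟩⟩ ⟨n,⟨p,hp⟩⟩).re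
          + (Bker U A x 0 ⟨n,⟨q,hq⟩⟩ ⟨n,⟨q,hq⟩⟩).re := by
      intro n p hp q hq
      rw [hEdef]
      simp only [Complex.sub_re, Complex.add_re]
      rfl
    have hEnonneg : ∀ n p (hp : p ∈ U n) q (hq : q ∈ U n), 0 ≤ E n p q := by
      intro n p hp q hq
      rw [hEker n p hp q hq]
      exact dker_nonneg hP0 _ _
    -- triangle estimate
    have hEq : ∀ n p (hp : p ∈ U n) q (hq : q ∈ U n) (k : ℕ),
        Real.sqrt ((Bker U A x k ⟨n,⟨p,hp⟩⟩ ⟨n,⟨p,hp⟩⟩).re)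
        ≤ Real.sqrt ((Bker U A x k ⟨n,⟨q,hq⟩⟩ ⟨n,⟨q,hq⟩⟩).re) + Real.sqrt (E n p q) := by
      intro n p hp q hq k
      have h1 := diag_tri (hPk k) ⟨n,⟨p,hp⟩⟩ ⟨n,⟨q,hq⟩⟩
      have h2 : (Bker U A x k ⟨n,⟨p,hp⟩⟩ ⟨n,⟨p,hp⟩⟩).re
          - (Bker U A x k ⟨n,⟨p,hp⟩⟩ ⟨n,⟨q,hq⟩⟩).re
          - (Bker U A x k ⟨n,⟨q,hq⟩⟩ ⟨n,⟨p,hp⟩⟩).re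
          + (Bker U A x k ⟨n,⟨q,hq⟩⟩ ⟨n,⟨q,hq⟩⟩).re ≤ E n p q := by
        rw [hEker n p hp q hq]
        exact diag_diff_le k _ _
      refine le_trans h1 (add_le_add le_rfl (Real.sqrt_le_sqrt h2))
    -- pointwise convergence of the diagonal remainders
    have U1 : ∀ n p (hp : p ∈ U n), ∀ ε > 0, ∃ K, ∀ k ≥ K,
        (Bker U A x k ⟨n,⟨p,hp⟩⟩ ⟨n,⟨p,hp⟩⟩).re < ε := by
      intro n p hp ε hε
      have hcw : ContinuousWithinAt (fun q => E n p q) (U n) p :=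
        (hEc2 n p hp).continuousWithinAt hp
      have hev : ∀ᶠ q in nhdsWithin p (U n), E n p q < ε := by
        have ht : Filter.Tendsto (fun q => E n p q) (nhdsWithin p (U n)) (nhds 0) := by
          have := hcw
          rwa [ContinuousWithinAt, hEdiag n p] at this
        exact ht.eventually_lt_const hε
      rw [eventually_nhdsWithin_iff] at hev
      obtain ⟨W, hWsub, hWopen, hpW⟩ := mem_nhds_iff.mp hev
      have hne' : (Subtype.val ⁻¹' W : Set ↥(U n)).Nonempty := ⟨⟨p, hp⟩, hpW⟩
      obtain ⟨j, hj⟩ := (hy n).exists_mem_open (hWopen.preimage continuous_subtype_val) hne'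
      obtain ⟨k0, hk0⟩ := hσ ⟨n, j⟩
      have hxk0 : x k0 = ⟨n, y n j⟩ := by
        show (⟨(σ k0).1, y (σ k0).1 (σ k0).2⟩ : Σ n : Fin (M+1), {p : Fin (N n) → ℂ // p ∈ U n})
          = ⟨n, y n j⟩
        rw [hk0]
      refine ⟨k0 + 1, fun k hk => ?_⟩
      have hvan : Bker U A x k (x k0) (x k0) = 0 :=
        Bker_vanish hP0 k k0 (by omega) (x k0)
      have hq0 : (Bker U A x k ⟨n, y n j⟩ ⟨n, y n j⟩).re = 0 := by
        rw [← hxk0, hvan]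
        simp
      have hElt : E n p ((y n j) : Fin (N n) → ℂ) < ε := hWsub hj ((y n j).2)
      have hE0 : 0 ≤ E n p ((y n j) : Fin (N n) → ℂ) :=
        hEnonneg n p hp _ (y n j).2
      have htri := hEq n p hp ((y n j) : Fin (N n) → ℂ) (y n j).2 k
      rw [hq0, Real.sqrt_zero, zero_add] at htri
      have h0 : 0 ≤ (Bker U A x k ⟨n,⟨p,hp⟩⟩ ⟨n,⟨p,hp⟩⟩).re := diag_nonneg (hPk k) _
      calc (Bker U A x k ⟨n,⟨p,hp⟩⟩ ⟨n,⟨p,hp⟩⟩).re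
          = Real.sqrt ((Bker U A x k ⟨n,⟨p,hp⟩⟩ ⟨n,⟨p,hp⟩⟩).re) ^ 2 :=
            (Real.sq_sqrt h0).symm
        _ ≤ Real.sqrt (E n p ((y n j) : Fin (N n) → ℂ)) ^ 2 := by
            exact pow_le_pow_left₀ (Real.sqrt_nonneg _) htri 2
        _ = E n p ((y n j) : Fin (N n) → ℂ) := Real.sq_sqrt hE0
        _ < ε := hElt
    -- uniform smallness of diagonal remainders on compact subsets of a fiber
    have U2 : ∀ n (C : Set (Fin (N n) → ℂ)), IsCompact C → C ⊆ U n → ∀ ε > 0,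
        ∃ K, ∀ k ≥ K, ∀ p, ∀ hp : p ∈ U n, p ∈ C →
          (Bker U A x k ⟨n,⟨p,hp⟩⟩ ⟨n,⟨p,hp⟩⟩).re < ε := by
      intro n C hC hCU ε hε
      have hε5 : 0 < ε/5 := by positivity
      set W : C → Set (Fin (N n) → ℂ) := fun q =>
        U n ∩ (fun p => E n p (q : Fin (N n) → ℂ)) ⁻¹' Set.Iio (ε/5) with hWdef
      have hWopen : ∀ q : C, IsOpen (W q) := fun q =>
        (hEc1 n (q : Fin (N n) → ℂ) (hCU q.2)).isOpen_inter_preimage (hUopen n) isOpen_Iio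
      have hcover : C ⊆ ⋃ q : C, W q := by
        intro p hpC
        refine Set.mem_iUnion.mpr ⟨⟨p, hpC⟩, ⟨hCU hpC, ?_⟩⟩
        simp only [Set.mem_preimage, Set.mem_Iio]
        rw [hEdiag n p]
        exact hε5
      obtain ⟨s, hs⟩ := hC.elim_finite_subcover W hWopen hcover
      choose Kfun hKfun using fun q : C => U1 n (q : Fin (N n) → ℂ) (hCU q.2) (ε/5) hε5
      refine ⟨s.sup Kfun, fun k hk p hp hpC => ?_⟩
      have hmem := hs hpC
      rw [Set.mem_iUnion₂] at hmem
      obtain ⟨q, hqs, hpW⟩ := hmem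
      have hkq : Kfun q ≤ k := le_trans (Finset.le_sup hqs) hk
      have h1 : (Bker U A x k ⟨n, ⟨(q : Fin (N n) → ℂ), hCU q.2⟩⟩
          ⟨n, ⟨(q : Fin (N n) → ℂ), hCU q.2⟩⟩).re < ε/5 := hKfun q k hkq
      have h2 : E n p (q : Fin (N n) → ℂ) < ε/5 := hpW.2
      have hE0 : 0 ≤ E n p (q : Fin (N n) → ℂ) := hEnonneg n p hp _ (hCU q.2)
      have htri := hEq n p hp (q : Fin (N n) → ℂ) (hCU q.2) k
      have hq0 : 0 ≤ (Bker U A x k ⟨n, ⟨(q : Fin (N n) → ℂ), hCU q.2⟩⟩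
          ⟨n, ⟨(q : Fin (N n) → ℂ), hCU q.2⟩⟩).re := diag_nonneg (hPk k) _
      have h0 : 0 ≤ (Bker U A x k ⟨n,⟨p,hp⟩⟩ ⟨n,⟨p,hp⟩⟩).re := diag_nonneg (hPk k) _
      have s1 : Real.sqrt ((Bker U A x k ⟨n,⟨p,hp⟩⟩ ⟨n,⟨p,hp⟩⟩).re)
          ≤ Real.sqrt (ε/5) + Real.sqrt (ε/5) :=
        le_trans htri (add_le_add (Real.sqrt_le_sqrt h1.le) (Real.sqrt_le_sqrt h2.le))
      have s2 : (Bker U A x k ⟨n,⟨p,hp⟩⟩ ⟨n,⟨p,hp⟩⟩).re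
          ≤ (Real.sqrt (ε/5) + Real.sqrt (ε/5))^2 := by
        calc (Bker U A x k ⟨n,⟨p,hp⟩⟩ ⟨n,⟨p,hp⟩⟩).re
            = Real.sqrt ((Bker U A x k ⟨n,⟨p,hp⟩⟩ ⟨n,⟨p,hp⟩⟩).re) ^ 2 :=
              (Real.sq_sqrt h0).symm
          _ ≤ _ := pow_le_pow_left₀ (Real.sqrt_nonneg _) s1 2
      have s3 : (Real.sqrt (ε/5) + Real.sqrt (ε/5))^2 = 4 * (ε/5) := by
        have := Real.sq_sqrt hε5.le
        nlinarith [this]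
      rw [s3] at s2
      linarith
    -- produce the factorization
    refine ⟨fun ν n p => ff U A x ν n p, fun ν n => ff_diff_on hA ν n, ?_⟩
    intro n m Kset hKc hKsub
    rw [Metric.tendstoUniformlyOn_iff]
    intro ε hε
    have hC1 : IsCompact (Prod.fst '' Kset) := hKc.image continuous_fst
    have hC1U : Prod.fst '' Kset ⊆ U n := by
      rintro _ ⟨pq, hpq, rfl⟩; exact (hKsub hpq).1
    have hC2 : IsCompact (conjVec '' (Prod.snd '' Kset)) :=
      (hKc.image continuous_snd).image (hconjCont _)
    have hC2U : conjVec '' (Prod.snd '' Kset) ⊆ U m := by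
      rintro _ ⟨q, ⟨pq, hpq, rfl⟩, rfl⟩
      obtain ⟨u, hu, huq⟩ := (hKsub hpq).2
      rw [← huq, hconj2]
      exact hu
    have hε2 : 0 < ε/2 := by positivity
    obtain ⟨K1, hK1⟩ := U2 n _ hC1 hC1U (ε/2) hε2
    obtain ⟨K2, hK2⟩ := U2 m _ hC2 hC2U (ε/2) hε2
    refine Filter.eventually_atTop.mpr ⟨max K1 K2, fun k hk pq hpq => ?_⟩
    have hp : pq.1 ∈ U n := (hKsub hpq).1
    have hq : conjVec pq.2 ∈ U m := by
      obtain ⟨u, hu, huq⟩ := (hKsub hpq).2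
      rw [← huq, hconj2]
      exact hu
    have hker : A n m pq.1 pq.2
        - (∑ ν ∈ Finset.range k, ff U A x ν n pq.1
            * (starRingEnd ℂ) (ff U A x ν m (conjVec pq.2)))
        = Bker U A x k ⟨n, ⟨pq.1, hp⟩⟩ ⟨m, ⟨conjVec pq.2, hq⟩⟩ := by
      have hsub := RR_eq_sub (U := U) (A := A) (x := x) k n m pq.1 (conjVec pq.2)
      rw [hconj2] at hsub
      exact hsub.symm
    rw [dist_eq_norm, hker]
    have hcs := cauchy_schwarz (hPk k) ⟨n, ⟨pq.1, hp⟩⟩ ⟨m, ⟨conjVec pq.2, hq⟩⟩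
    have hra : (Bker U A x k ⟨n, ⟨pq.1, hp⟩⟩ ⟨n, ⟨pq.1, hp⟩⟩).re < ε/2 :=
      hK1 k (le_trans (le_max_left _ _) hk) pq.1 hp ⟨pq, hpq, rfl⟩
    have hrb : (Bker U A x k ⟨m, ⟨conjVec pq.2, hq⟩⟩ ⟨m, ⟨conjVec pq.2, hq⟩⟩).re < ε/2 :=
      hK2 k (le_trans (le_max_right _ _) hk) (conjVec pq.2) hq ⟨pq.2, ⟨pq, hpq, rfl⟩, rfl⟩
    have h0a : 0 ≤ (Bker U A x k ⟨n, ⟨pq.1, hp⟩⟩ ⟨n, ⟨pq.1, hp⟩⟩).re := diag_nonneg (hPk k) _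
    have h0b : 0 ≤ (Bker U A x k ⟨m, ⟨conjVec pq.2, hq⟩⟩ ⟨m, ⟨conjVec pq.2, hq⟩⟩).re :=
      diag_nonneg (hPk k) _
    have hprod : Complex.normSq (Bker U A x k ⟨n, ⟨pq.1, hp⟩⟩ ⟨m, ⟨conjVec pq.2, hq⟩⟩)
        ≤ (ε/2) * (ε/2) :=
      le_trans hcs (mul_le_mul hra.le hrb.le h0b (by positivity))
    have hnorm : ‖Bker U A x k ⟨n, ⟨pq.1, hp⟩⟩ ⟨m, ⟨conjVec pq.2, hq⟩⟩‖
        = Real.sqrt (Complex.normSq (Bker U A x k ⟨n, ⟨pq.1, hp⟩⟩ ⟨m, ⟨conjVec pq.2, hq⟩⟩)) := by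
      rw [Complex.norm_def]
    calc ‖Bker U A x k ⟨n, ⟨pq.1, hp⟩⟩ ⟨m, ⟨conjVec pq.2, hq⟩⟩‖
        = Real.sqrt (Complex.normSq (Bker U A x k ⟨n, ⟨pq.1, hp⟩⟩ ⟨m, ⟨conjVec pq.2, hq⟩⟩)) :=
          hnorm
      _ ≤ Real.sqrt ((ε/2) * (ε/2)) := Real.sqrt_le_sqrt hprod
      _ = ε/2 := Real.sqrt_mul_self hε2.le
      _ < ε := by linarith
  · rintro ⟨f, hfd, hconv⟩
    intro L c t ht
    have hconj2 : ∀ {K : ℕ} (z : Fin K → ℂ), conjVec (conjVec z) = z := by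
      intro K z; funext i; simp [conjVec]
    have hpt : ∀ n m (l k' : Fin L),
        Filter.Tendsto (fun K => ∑ ν ∈ Finset.range K,
            f ν n (t n l) * (starRingEnd ℂ) (f ν m (t m k')))
          Filter.atTop (nhds (A n m (t n l) (conjVec (t m k')))) := by
      intro n m l k'
      have hsub : ({(t n l, conjVec (t m k'))} :
          Set ((Fin (N n) → ℂ) × (Fin (N m) → ℂ))) ⊆ (U n) ×ˢ (conjVec '' U m) := by
        rw [Set.singleton_subset_iff]
        exact ⟨ht n l, ⟨t m k', ht m k', rfl⟩⟩
      have h := (hconv n m _ isCompact_singleton hsub).tendsto_at (Set.mem_singleton _)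
      simpa [hconj2] using h
    set w : ℕ → ℂ := fun ν => ∑ n, ∑ l, c n l * f ν n (t n l) with hw
    set T : ℕ → ℂ := fun K => ∑ n, ∑ m, ∑ l, ∑ k,
        c n l * (starRingEnd ℂ) (c m k)
          * ∑ ν ∈ Finset.range K, f ν n (t n l) * (starRingEnd ℂ) (f ν m (t m k)) with hT
    have hTlim : Filter.Tendsto T Filter.atTop (nhds (∑ n, ∑ m, ∑ l, ∑ k,
        c n l * (starRingEnd ℂ) (c m k) * A n m (t n l) (conjVec (t m k)))) := by
      refine tendsto_finset_sum _ fun n _ => tendsto_finset_sum _ fun m _ =>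
        tendsto_finset_sum _ fun l _ => tendsto_finset_sum _ fun k _ => ?_
      exact (hpt n m l k).const_mul _
    have hsingle : ∀ ν, (∑ n, ∑ m, ∑ l, ∑ k, c n l * (starRingEnd ℂ) (c m k)
        * (f ν n (t n l) * (starRingEnd ℂ) (f ν m (t m k))))
        = w ν * (starRingEnd ℂ) (w ν) := by
      intro ν
      rw [hw]
      simp only [map_sum, map_mul]
      rw [Finset.sum_mul_sum]
      refine Finset.sum_congr rfl fun n _ => Finset.sum_congr rfl fun m _ => ?_
      rw [Finset.sum_mul_sum]
      refine Finset.sum_congr rfl fun l _ => Finset.sum_congr rfl fun k _ => by ring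
    have hTval : ∀ K, T K = ∑ ν ∈ Finset.range K, w ν * (starRingEnd ℂ) (w ν) := by
      intro K
      induction K with
      | zero => simp [hT]
      | succ K ih =>
          rw [Finset.sum_range_succ, ← ih, ← hsingle K, hT]
          simp only [Finset.sum_range_succ, mul_add, Finset.sum_add_distrib]
    have him : ∀ K, (T K).im = 0 := by
      intro K
      rw [hTval K, Complex.im_sum]
      refine Finset.sum_eq_zero fun ν _ => ?_
      rw [Complex.mul_conj]
      simp
    have hre : ∀ K, 0 ≤ (T K).re := by
      intro K
      rw [hTval K, Complex.re_sum]
      refine Finset.sum_nonneg fun ν _ => ?_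
      rw [Complex.mul_conj]
      simp [Complex.normSq_nonneg]
    constructor
    · refine tendsto_nhds_unique ((Complex.continuous_im.tendsto _).comp hTlim) ?_
      have hfe : (Complex.im ∘ T) = fun _ => (0:ℝ) := funext fun K => him K
      rw [hfe]
      exact tendsto_const_nhds
    · exact ge_of_tendsto ((Complex.continuous_re.tendsto _).comp hTlim)
        (Filter.Eventually.of_forall hre)
end
end
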